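/- arXiv:1609.09856 — 7 statements merged into one kernel-verified Lean document; each statement's English description precedes it below -/
import Mathlib

section
/- Let (𝔄, H, (ι_j)_{j∈ℤ}, Ω) be an exchangeable stochastic process. Then the following are equivalent: (a) [product state condition] ⟨XYΩ, Ω⟩ = ⟨XΩ, Ω⟩·⟨YΩ, Ω⟩ whenever I₁, I₂ ⊆ ℤ are finite and disjoint, X ∈ 𝔄_{I₁} and Y ∈ 𝔄_{I₂}; (b) [weak clustering] for every finite I₀ ⊆ ℤ, every X ∈ 𝔄_{I₀}, every m ≥ 1, k₁,…,k_m ∈ ℤ and B₁,…,B_m ∈ 𝔄, the averages (1/|P_I|) Σ_{g ∈ P_I} ⟨X · ι_{g(k₁)}(B₁)⋯ι_{g(k_m)}(B_m) Ω, Ω⟩ converge, along the net of finite subsets I ⊆ ℤ directed by inclusion, to ⟨XΩ, Ω⟩·⟨ι_{k₁}(B₁)⋯ι_{k_m}(B_m)Ω, Ω⟩. -/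
open Filter Pointwise

variable {A H : Type*} [NormedRing A] [StarRing A] [CStarRing A]
  [NormedAlgebra ℂ A] [StarModule ℂ A] [CompleteSpace A]
  [NormedAddCommGroup H] [InnerProductSpace ℂ H] [CompleteSpace H]

/-- The *-subalgebra `𝔄_I` of `B(H)` generated by `⋃_{j ∈ I} ι_j(𝔄)`. -/
noncomputable def localAlgebra (ι : ℤ → A →⋆ₐ[ℂ] (H →L[ℂ] H)) (I : Finset ℤ) :
    StarSubalgebra ℂ (H →L[ℂ] H) :=
  StarAlgebra.adjoin ℂ (⋃ j ∈ I, Set.range fun a : A => ι j a)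

/-- The permutation of `ℤ` obtained by extending a permutation of the finite set `I`
by the identity outside `I`; as `g` ranges over `Equiv.Perm I` these are exactly the
elements of the group `P_I` of permutations of `ℤ` fixing `ℤ ∖ I` pointwise. -/
def extendPerm (I : Finset ℤ) (g : Equiv.Perm {x : ℤ // x ∈ I}) : Equiv.Perm ℤ :=
  g.extendDomain (Equiv.refl _)

/-! ### Auxiliary lemmas -/

section Aux

lemma extendPerm_apply_mem (I : Finset ℤ) (g : Equiv.Perm {x : ℤ // x ∈ I}) {x : ℤ}
    (hx : x ∈ I) : extendPerm I g x = (g ⟨x, hx⟩ : ℤ) := by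
  simpa [extendPerm] using Equiv.Perm.extendDomain_apply_subtype g (Equiv.refl _) hx

lemma extendPerm_apply_not_mem (I : Finset ℤ) (g : Equiv.Perm {x : ℤ // x ∈ I}) {x : ℤ}
    (hx : x ∉ I) : extendPerm I g x = x := by
  simpa [extendPerm] using Equiv.Perm.extendDomain_apply_not_subtype g (Equiv.refl _) hx

lemma extendPerm_support_finite (I : Finset ℤ) (g : Equiv.Perm {x : ℤ // x ∈ I}) :
    {x : ℤ | extendPerm I g x ≠ x}.Finite := by
  apply Set.Finite.subset I.finite_toSet
  intro x hx
  by_contra hxI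
  exact hx (extendPerm_apply_not_mem I g hxI)

/-- star of a list product. -/
lemma star_list_prod' {M : Type*} [Monoid M] [StarMul M] (l : List M) :
    star l.prod = ((l.map star).reverse).prod := by
  induction l with
  | nil => simp
  | cons a l ih => simp [star_mul, ih]

/-- Counting permutations with a constraint on the image of one point. -/
lemma perm_fiber_card {α : Type*} [Fintype α] [DecidableEq α] (x : α) (p : α → Prop)
    [DecidablePred p] :
    (Finset.univ.filter fun g : Equiv.Perm α => p (g x)).card * Fintype.card α
      = Fintype.card (Equiv.Perm α) * (Finset.univ.filter p).card := by
  classical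
  have key : ∀ y z : α, (Finset.univ.filter fun g : Equiv.Perm α => g x = y).card
      = (Finset.univ.filter fun g : Equiv.Perm α => g x = z).card := by
    intro y z
    refine Finset.card_bij' (fun g _ => Equiv.swap y z * g) (fun g _ => Equiv.swap y z * g)
      ?_ ?_ ?_ ?_
    · intro g hg
      simp only [Finset.mem_filter, Finset.mem_univ, true_and] at hg ⊢
      simp [Equiv.Perm.mul_apply, hg]
    · intro g hg
      simp only [Finset.mem_filter, Finset.mem_univ, true_and] at hg ⊢
      simp [Equiv.Perm.mul_apply, hg]
    · intro g _
      show Equiv.swap y z * (Equiv.swap y z * g) = g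
      rw [← mul_assoc, Equiv.swap_mul_self, one_mul]
    · intro g _
      show Equiv.swap y z * (Equiv.swap y z * g) = g
      rw [← mul_assoc, Equiv.swap_mul_self, one_mul]
  have h1 : Fintype.card (Equiv.Perm α)
      = ∑ y : α, (Finset.univ.filter fun g : Equiv.Perm α => g x = y).card := by
    rw [← Finset.card_univ]
    exact Finset.card_eq_sum_card_fiberwise (f := fun g : Equiv.Perm α => g x)
      (t := Finset.univ) (fun g _ => Finset.mem_univ _)
  have h2 : (Finset.univ.filter fun g : Equiv.Perm α => p (g x)).card
      = ∑ y ∈ Finset.univ.filter p,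
          (Finset.univ.filter fun g : Equiv.Perm α => g x = y).card := by
    rw [Finset.card_eq_sum_card_fiberwise (f := fun g : Equiv.Perm α => g x)
      (t := Finset.univ.filter p) (fun g hg => by
        simpa using hg)]
    refine Finset.sum_congr rfl fun y hy => ?_
    congr 1
    ext g
    simp only [Finset.mem_filter, Finset.mem_univ, true_and] at hy ⊢
    constructor
    · rintro ⟨-, h⟩; exact h
    · intro h; exact ⟨h ▸ hy, h⟩
  have h3 : ∀ y : α, (Finset.univ.filter fun g : Equiv.Perm α => g x = y).card
      = (Finset.univ.filter fun g : Equiv.Perm α => g x = x).card := fun y => key y x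
  rw [h2, h1]
  simp only [h3, Finset.sum_const, smul_eq_mul, Finset.card_univ]
  ring

/-- Extending (part of) a permutation to one with finite support avoiding `I₁`. -/
lemma exists_perm_extend (σ : Equiv.Perm ℤ) (I₁ : Finset ℤ) : ∀ (K : Finset ℤ),
    (∀ x ∈ K, x ∉ I₁) → (∀ x ∈ K, σ x ∉ I₁) →
    ∃ h : Equiv.Perm ℤ, {x : ℤ | h x ≠ x}.Finite ∧ (∀ x ∈ I₁, h x = x) ∧
      ∀ x ∈ K, h x = σ x := by
  classical
  intro K
  induction K using Finset.induction_on with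
  | empty =>
      exact fun _ _ => ⟨1, by simp, by simp, by simp⟩
  | @insert x K hxK ih =>
      intro h1 h2
      obtain ⟨h, hfin, hfix, hval⟩ := ih (fun z hz => h1 z (Finset.mem_insert_of_mem hz))
        (fun z hz => h2 z (Finset.mem_insert_of_mem hz))
      have hxI : x ∉ I₁ := h1 x (Finset.mem_insert_self x K)
      have hsxI : σ x ∉ I₁ := h2 x (Finset.mem_insert_self x K)
      by_cases hc : h x = σ x
      · refine ⟨h, hfin, hfix, ?_⟩
        intro z hz
        rcases Finset.mem_insert.1 hz with rfl | hz
        · exact hc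
        · exact hval z hz
      · refine ⟨Equiv.swap (h x) (σ x) * h, ?_, ?_, ?_⟩
        · apply Set.Finite.subset (hfin.union ((Set.finite_singleton (σ x)).insert (h x)))
          intro z hz
          simp only [Set.mem_setOf_eq, Equiv.Perm.mul_apply] at hz
          by_cases hz1 : h z = z
          · rw [hz1] at hz
            rcases eq_or_ne z (h x) with rfl | hne1
            · exact Or.inr (Set.mem_insert _ _)
            · rcases eq_or_ne z (σ x) with rfl | hne2
              · exact Or.inr (Set.mem_insert_of_mem _ rfl)
              · exact absurd (Equiv.swap_apply_of_ne_of_ne hne1 hne2) hz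
          · exact Or.inl hz1
        · intro w hw
          have hw1 : h w = w := hfix w hw
          have hne1 : w ≠ h x := by
            intro he
            have : h x = h w := by rw [hw1, ← he]
            exact hxI (by rw [h.injective this]; exact hw)
          have hne2 : w ≠ σ x := fun he => hsxI (he ▸ hw)
          simp only [Equiv.Perm.mul_apply, hw1]
          exact Equiv.swap_apply_of_ne_of_ne hne1 hne2
        · intro z hz
          rcases Finset.mem_insert.1 hz with rfl | hz
          · simp [Equiv.Perm.mul_apply, Equiv.swap_apply_left]
          · have hvz : h z = σ z := hval z hz
            have hne1 : σ z ≠ h x := by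
              intro he
              have : h z = h x := by rw [hvz, he]
              exact hxK (h.injective this ▸ hz)
            have hne2 : σ z ≠ σ x := fun he => hxK (σ.injective he ▸ hz)
            simp only [Equiv.Perm.mul_apply, hvz]
            exact Equiv.swap_apply_of_ne_of_ne hne1 hne2

variable (ι : ℤ → A →⋆ₐ[ℂ] (H →L[ℂ] H))

lemma norm_iota_le (j : ℤ) (a : A) : ‖ι j a‖ ≤ ‖a‖ := by
  letI : CStarAlgebra A := ⟨⟩
  exact NonUnitalStarAlgHom.norm_apply_le (ι j) a

lemma norm_mon_le {m : ℕ} (hm : 1 ≤ m) (f : Fin m → ℤ) (B : Fin m → A) :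
    ‖(List.ofFn fun i => ι (f i) (B i)).prod‖ ≤ ∏ i, ‖B i‖ := by
  have h1 : (List.ofFn fun i => ι (f i) (B i)) ≠ [] := by
    simp only [ne_eq, List.ofFn_eq_nil_iff]
    omega
  refine (List.norm_prod_le' h1).trans ?_
  rw [List.map_ofFn, List.prod_ofFn]
  exact Finset.prod_le_prod (fun i _ => norm_nonneg _) (fun i _ => norm_iota_le ι _ _)

/-- Monomials lie in the local algebra. -/
lemma mon_mem_localAlgebra {m : ℕ} (f : Fin m → ℤ) (B : Fin m → A) {I : Finset ℤ}
    (hf : ∀ i, f i ∈ I) :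
    (List.ofFn fun i => ι (f i) (B i)).prod ∈ localAlgebra ι I := by
  apply list_prod_mem
  intro x hx
  rw [List.mem_ofFn] at hx
  obtain ⟨i, rfl⟩ := hx
  exact StarAlgebra.subset_adjoin ℂ _ (Set.mem_biUnion (hf i) ⟨B i, rfl⟩)

/-- The set of monomials with indices in `I`, in list form. -/
def monSet (I : Finset ℤ) : Set (H →L[ℂ] H) :=
  {M | ∃ l : List (ℤ × A), (∀ p ∈ l, p.1 ∈ I) ∧ M = (l.map fun p => ι p.1 p.2).prod}

lemma monSet_mul_subset (I : Finset ℤ) : monSet ι I * monSet ι I ⊆ monSet ι I := by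
  rintro z ⟨x, ⟨l₁, h₁, rfl⟩, y, ⟨l₂, h₂, rfl⟩, rfl⟩
  refine ⟨l₁ ++ l₂, ?_, ?_⟩
  · intro p hp
    rcases List.mem_append.1 hp with h | h
    · exact h₁ p h
    · exact h₂ p h
  · rw [List.map_append, List.prod_append]

/-- Every element of the local algebra is a linear combination of monomials. -/
lemma localAlgebra_le_span {I : Finset ℤ} {X : H →L[ℂ] H} (hX : X ∈ localAlgebra ι I) :
    X ∈ Submodule.span ℂ (monSet ι I) := by
  induction hX using StarAlgebra.adjoin_induction with
  | mem x hx =>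
      apply Submodule.subset_span
      simp only [Set.mem_iUnion, Set.mem_range] at hx
      obtain ⟨j, hj, a, rfl⟩ := hx
      exact ⟨[(j, a)], by simpa using hj, by simp⟩
  | algebraMap r =>
      rw [Algebra.algebraMap_eq_smul_one]
      exact Submodule.smul_mem _ _ (Submodule.subset_span ⟨[], by simp, by simp⟩)
  | add x y _ _ hx hy => exact Submodule.add_mem _ hx hy
  | mul x y _ _ hx hy =>
      have h := Submodule.mul_mem_mul hx hy
      rw [Submodule.span_mul_span] at h
      exact Submodule.span_mono (monSet_mul_subset ι I) h
  | star x hmem hx =>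
      clear hmem
      induction hx using Submodule.span_induction with
      | mem M hM =>
          obtain ⟨l, hl, rfl⟩ := hM
          apply Submodule.subset_span
          refine ⟨l.reverse.map (fun p => (p.1, star p.2)), ?_, ?_⟩
          · intro p hp
            simp only [List.mem_map, List.mem_reverse] at hp
            obtain ⟨q, hq, rfl⟩ := hp
            exact hl q hq
          · rw [star_list_prod', List.map_map, List.map_map, ← List.map_reverse]
            congr 1
            apply List.map_congr_left
            intro p _
            exact (map_star (ι p.1) p.2).symm
      | zero => simp
      | add x y _ _ hx hy => rw [star_add]; exact Submodule.add_mem _ hx hy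
      | smul r x _ hx =>
          rw [star_smul]
          exact Submodule.smul_mem _ _ hx

/-- Splitting a concatenated monomial. -/
lemma ofFn_append_prod (f : ℤ → ℤ) {n m : ℕ} (j : Fin n → ℤ) (a : Fin n → A)
    (k : Fin m → ℤ) (B : Fin m → A) :
    (List.ofFn fun i : Fin (n + m) => ι (f (Fin.append j k i)) (Fin.append a B i)).prod
      = (List.ofFn fun t => ι (f (j t)) (a t)).prod *
        (List.ofFn fun i => ι (f (k i)) (B i)).prod := by
  rw [List.ofFn_add, List.prod_append]
  simp [Fin.append_left, Fin.append_right]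

lemma ofFn_append_prod' {n m : ℕ} (j : Fin n → ℤ) (a : Fin n → A)
    (k : Fin m → ℤ) (B : Fin m → A) :
    (List.ofFn fun i : Fin (n + m) => ι (Fin.append j k i) (Fin.append a B i)).prod
      = (List.ofFn fun t => ι (j t) (a t)).prod *
        (List.ofFn fun i => ι (k i) (B i)).prod := by
  rw [List.ofFn_add, List.prod_append]
  simp [Fin.append_left, Fin.append_right]

/-- Exchangeability applied to a pair (monomial in fixed indices) × (monomial moved by `h`). -/
lemma exch_pair (Ω : H)
    (hexch : ∀ g : Equiv.Perm ℤ, {x : ℤ | g x ≠ x}.Finite →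
      ∀ n : ℕ, 1 ≤ n → ∀ (j : Fin n → ℤ) (a : Fin n → A),
        (inner ℂ Ω (((List.ofFn fun i => ι (g (j i)) (a i)).prod) Ω) : ℂ)
          = inner ℂ Ω (((List.ofFn fun i => ι (j i) (a i)).prod) Ω))
    {n m : ℕ} (hm : 1 ≤ m) (j : Fin n → ℤ) (a : Fin n → A)
    (k : Fin m → ℤ) (B : Fin m → A) (h : Equiv.Perm ℤ)
    (hfin : {x : ℤ | h x ≠ x}.Finite) (hj : ∀ t, h (j t) = j t) :
    (inner ℂ Ω (((List.ofFn fun t => ι (j t) (a t)).prod *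
        (List.ofFn fun i => ι (h (k i)) (B i)).prod) Ω) : ℂ)
      = inner ℂ Ω (((List.ofFn fun t => ι (j t) (a t)).prod *
        (List.ofFn fun i => ι (k i) (B i)).prod) Ω) := by
  have H1 := hexch h hfin (n + m) (by omega) (Fin.append j k) (Fin.append a B)
  rw [ofFn_append_prod ι h j a k B, ofFn_append_prod' ι j a k B] at H1
  simp only [hj] at H1
  exact H1

/-- Counting "bad" permutations. -/
lemma count_bad (I₀ : Finset ℤ) {m : ℕ} (k : Fin m → ℤ) (I : Finset ℤ)
    (hk : ∀ i, k i ∈ I) :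
    (Finset.univ.filter fun g : Equiv.Perm {x : ℤ // x ∈ I} =>
        ∃ i, extendPerm I g (k i) ∈ I₀).card * I.card
      ≤ m * (Fintype.card (Equiv.Perm {x : ℤ // x ∈ I}) * I₀.card) := by
  classical
  have hsub : (Finset.univ.filter fun g : Equiv.Perm {x : ℤ // x ∈ I} =>
      ∃ i, extendPerm I g (k i) ∈ I₀) ⊆
      Finset.univ.biUnion (fun i : Fin m =>
        Finset.univ.filter fun g : Equiv.Perm {x : ℤ // x ∈ I} =>
          extendPerm I g (k i) ∈ I₀) := by
    intro g hg
    simp only [Finset.mem_filter, Finset.mem_univ, true_and] at hg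
    obtain ⟨i, hi⟩ := hg
    exact Finset.mem_biUnion.2 ⟨i, Finset.mem_univ i, by
      simp only [Finset.mem_filter, Finset.mem_univ, true_and]; exact hi⟩
  calc (Finset.univ.filter fun g : Equiv.Perm {x : ℤ // x ∈ I} =>
        ∃ i, extendPerm I g (k i) ∈ I₀).card * I.card
      ≤ (∑ i : Fin m, (Finset.univ.filter fun g : Equiv.Perm {x : ℤ // x ∈ I} =>
          extendPerm I g (k i) ∈ I₀).card) * I.card := by
        exact Nat.mul_le_mul_right _
          ((Finset.card_le_card hsub).trans (Finset.card_biUnion_le))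
    _ = ∑ i : Fin m, (Finset.univ.filter fun g : Equiv.Perm {x : ℤ // x ∈ I} =>
          extendPerm I g (k i) ∈ I₀).card * I.card := by
        rw [Finset.sum_mul]
    _ ≤ ∑ _i : Fin m, Fintype.card (Equiv.Perm {x : ℤ // x ∈ I}) * I₀.card := by
        refine Finset.sum_le_sum fun i _ => ?_
        have hcongr : (Finset.univ.filter fun g : Equiv.Perm {x : ℤ // x ∈ I} =>
            extendPerm I g (k i) ∈ I₀)
            = (Finset.univ.filter fun g : Equiv.Perm {x : ℤ // x ∈ I} =>
              ((g ⟨k i, hk i⟩ : ℤ) ∈ I₀)) := by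
          apply Finset.filter_congr
          intro g _
          rw [extendPerm_apply_mem I g (hk i)]
        rw [hcongr]
        have := perm_fiber_card (α := {x : ℤ // x ∈ I}) ⟨k i, hk i⟩
          (fun y => (y : ℤ) ∈ I₀)
        rw [Fintype.card_coe] at this
        rw [this]
        refine Nat.mul_le_mul_left _ ?_
        refine Finset.card_le_card_of_injOn (fun y => (y : ℤ)) ?_ ?_
        · intro y hy
          simpa using hy
        · intro y _ z _ hyz
          exact Subtype.ext hyz
    _ = m * (Fintype.card (Equiv.Perm {x : ℤ // x ∈ I}) * I₀.card) := by
        rw [Finset.sum_const, Finset.card_univ, Fintype.card_fin, smul_eq_mul]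

lemma card_real_tendsto : Tendsto (fun I : Finset ℤ => (I.card : ℝ)) atTop atTop := by
  apply tendsto_natCast_atTop_atTop.comp
  apply tendsto_atTop_atTop.2
  intro b
  refine ⟨(Finset.range b).image (Nat.cast : ℕ → ℤ), fun I hI => ?_⟩
  calc b = ((Finset.range b).image (Nat.cast : ℕ → ℤ)).card := by
        rw [Finset.card_image_of_injective _ Nat.cast_injective, Finset.card_range]
    _ ≤ I.card := Finset.card_le_card hI

/-- The core convergence lemma: if the value of the state on `X ⋅ (moved monomial)` is
constant (`= c`) whenever the monomial is moved entirely outside `I₀`, then the averages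
converge to `c`. -/
lemma core (Ω : H) (hΩ : ‖Ω‖ = 1) (I₀ : Finset ℤ) (X : H →L[ℂ] H) (m : ℕ) (hm : 1 ≤ m)
    (k : Fin m → ℤ) (B : Fin m → A) (c : ℂ)
    (hgood : ∀ σ : Equiv.Perm ℤ, {x : ℤ | σ x ≠ x}.Finite → (∀ i, σ (k i) ∉ I₀) →
      (inner ℂ Ω ((X * (List.ofFn fun i => ι (σ (k i)) (B i)).prod) Ω) : ℂ) = c) :
    Tendsto (fun I : Finset ℤ =>
        (Fintype.card (Equiv.Perm {x : ℤ // x ∈ I}) : ℂ)⁻¹ *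
          ∑ g : Equiv.Perm {x : ℤ // x ∈ I},
            (inner ℂ Ω ((X * (List.ofFn fun i => ι (extendPerm I g (k i)) (B i)).prod) Ω) : ℂ))
      atTop (nhds c) := by
  classical
  set C : ℝ := ‖X‖ * ∏ i, ‖B i‖ + ‖c‖ with hCdef
  have hC0 : 0 ≤ C := by
    have : (0:ℝ) ≤ ‖X‖ * ∏ i, ‖B i‖ :=
      mul_nonneg (norm_nonneg _) (Finset.prod_nonneg fun i _ => norm_nonneg _)
    have := norm_nonneg c
    positivity
  have hbound : ∀ f : Fin m → ℤ,
      ‖(inner ℂ Ω ((X * (List.ofFn fun i => ι (f i) (B i)).prod) Ω) : ℂ) - c‖ ≤ C := by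
    intro f
    have h2 : ‖(inner ℂ Ω ((X * (List.ofFn fun i => ι (f i) (B i)).prod) Ω) : ℂ)‖
        ≤ ‖X‖ * ∏ i, ‖B i‖ := by
      calc ‖(inner ℂ Ω ((X * (List.ofFn fun i => ι (f i) (B i)).prod) Ω) : ℂ)‖
          ≤ ‖Ω‖ * ‖(X * (List.ofFn fun i => ι (f i) (B i)).prod) Ω‖ :=
            norm_inner_le_norm _ _
        _ ≤ ‖Ω‖ * (‖X * (List.ofFn fun i => ι (f i) (B i)).prod‖ * ‖Ω‖) := by
            gcongr
            exact ContinuousLinearMap.le_opNorm _ _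
        _ = ‖X * (List.ofFn fun i => ι (f i) (B i)).prod‖ := by rw [hΩ]; ring
        _ ≤ ‖X‖ * ‖(List.ofFn fun i => ι (f i) (B i)).prod‖ := norm_mul_le _ _
        _ ≤ ‖X‖ * ∏ i, ‖B i‖ :=
            mul_le_mul_of_nonneg_left (norm_mon_le ι hm f B) (norm_nonneg X)
    calc ‖(inner ℂ Ω ((X * (List.ofFn fun i => ι (f i) (B i)).prod) Ω) : ℂ) - c‖
        ≤ ‖(inner ℂ Ω ((X * (List.ofFn fun i => ι (f i) (B i)).prod) Ω) : ℂ)‖ + ‖c‖ :=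
          norm_sub_le _ _
      _ ≤ C := by rw [hCdef]; linarith
  rw [← tendsto_sub_nhds_zero_iff]
  apply squeeze_zero_norm' (a := fun I : Finset ℤ => (m * I₀.card * C) / I.card)
  · filter_upwards [Filter.eventually_ge_atTop (I₀ ∪ Finset.image k Finset.univ)] with I hI
    have hk : ∀ i, k i ∈ I := fun i =>
      hI (Finset.mem_union_right _ (Finset.mem_image_of_mem k (Finset.mem_univ i)))
    have hI₀ : I₀ ⊆ I := fun x hx => hI (Finset.mem_union_left _ hx)
    have hn : 0 < I.card := Finset.card_pos.2 ⟨k ⟨0, hm⟩, hk _⟩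
    set N := Fintype.card (Equiv.Perm {x : ℤ // x ∈ I}) with hN
    have hN0 : 0 < N := Fintype.card_pos
    have hNC : (N : ℂ) ≠ 0 := Nat.cast_ne_zero.2 hN0.ne'
    set t : Equiv.Perm {x : ℤ // x ∈ I} → ℂ := fun g =>
      (inner ℂ Ω ((X * (List.ofFn fun i => ι (extendPerm I g (k i)) (B i)).prod) Ω) : ℂ)
      with ht
    have step1 : (N : ℂ)⁻¹ * (∑ g, t g) - c = (N : ℂ)⁻¹ * ∑ g, (t g - c) := by
      rw [Finset.sum_sub_distrib, mul_sub, Finset.sum_const, Finset.card_univ, ← hN,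
        nsmul_eq_mul]
      rw [← mul_assoc, inv_mul_cancel₀ hNC, one_mul]
    set bad := Finset.univ.filter fun g : Equiv.Perm {x : ℤ // x ∈ I} =>
      ∃ i, extendPerm I g (k i) ∈ I₀ with hbad
    have hsum : ∑ g, ‖t g - c‖ ≤ (bad.card : ℝ) * C := by
      rw [← Finset.sum_filter_add_sum_filter_not Finset.univ
        (fun g : Equiv.Perm {x : ℤ // x ∈ I} => ∃ i, extendPerm I g (k i) ∈ I₀)]
      have hgood0 : ∑ g ∈ Finset.univ.filter (fun g : Equiv.Perm {x : ℤ // x ∈ I} =>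
          ¬ ∃ i, extendPerm I g (k i) ∈ I₀), ‖t g - c‖ = 0 := by
        apply Finset.sum_eq_zero
        intro g hg
        simp only [Finset.mem_filter, Finset.mem_univ, true_and, not_exists] at hg
        have := hgood (extendPerm I g) (extendPerm_support_finite I g) hg
        rw [ht]
        simp only [this, sub_self, norm_zero]
      rw [hgood0, add_zero]
      exact (Finset.sum_le_card_nsmul _ _ C fun g _ => hbound _).trans_eq (by
        rw [nsmul_eq_mul])
    have step3 : (bad.card : ℝ) * I.card ≤ (m : ℝ) * (N * I₀.card) := by
      exact_mod_cast count_bad I₀ k I hk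
    rw [step1]
    calc ‖(N : ℂ)⁻¹ * ∑ g, (t g - c)‖
        = (N : ℝ)⁻¹ * ‖∑ g, (t g - c)‖ := by
          rw [norm_mul, norm_inv]
          norm_num
      _ ≤ (N : ℝ)⁻¹ * ((bad.card : ℝ) * C) := by
          gcongr
          exact (norm_sum_le _ _).trans hsum
      _ ≤ (m * I₀.card * C) / I.card := by
          rw [inv_mul_eq_div, div_le_div_iff₀ (by exact_mod_cast hN0) (by exact_mod_cast hn)]
          nlinarith [mul_le_mul_of_nonneg_right step3 hC0, hC0,
            (by positivity : (0:ℝ) ≤ (m : ℝ) * I₀.card * C)]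
  · exact Tendsto.div_atTop tendsto_const_nhds card_real_tendsto

end Aux

/-- for an exchangeable process, the product state condition is
equivalent to weak clustering along the net of finite subsets of `ℤ`. -/
theorem productState_iff_weakClustering
    (ι : ℤ → A →⋆ₐ[ℂ] (H →L[ℂ] H)) (Ω : H) (hΩ : ‖Ω‖ = 1)
    (hexch : ∀ g : Equiv.Perm ℤ, {x : ℤ | g x ≠ x}.Finite →
      ∀ n : ℕ, 1 ≤ n → ∀ (j : Fin n → ℤ) (a : Fin n → A),
        (inner ℂ Ω (((List.ofFn fun i => ι (g (j i)) (a i)).prod) Ω) : ℂ)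
          = inner ℂ Ω (((List.ofFn fun i => ι (j i) (a i)).prod) Ω)) :
    (∀ I₁ I₂ : Finset ℤ, Disjoint I₁ I₂ →
        ∀ X ∈ localAlgebra ι I₁, ∀ Y ∈ localAlgebra ι I₂,
          (inner ℂ Ω ((X * Y) Ω) : ℂ) = inner ℂ Ω (X Ω) * inner ℂ Ω (Y Ω))
      ↔
    (∀ I₀ : Finset ℤ, ∀ X ∈ localAlgebra ι I₀,
        ∀ m : ℕ, 1 ≤ m → ∀ (k : Fin m → ℤ) (B : Fin m → A),
          Tendsto
            (fun I : Finset ℤ =>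
              (Fintype.card (Equiv.Perm {x : ℤ // x ∈ I}) : ℂ)⁻¹ *
                ∑ g : Equiv.Perm {x : ℤ // x ∈ I},
                  (inner ℂ Ω ((X *
                    (List.ofFn fun i => ι (extendPerm I g (k i)) (B i)).prod) Ω) : ℂ))
            atTop
            (nhds ((inner ℂ Ω (X Ω) : ℂ) *
              inner ℂ Ω (((List.ofFn fun i => ι (k i) (B i)).prod) Ω)))) := by
  classical
  constructor
  · -- product state → weak clustering
    intro hPS I₀ X hX m hm k B
    apply core ι Ω hΩ I₀ X m hm k B
    intro σ hfin hσ
    have hmem := mon_mem_localAlgebra ι (fun i => σ (k i)) B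
      (I := Finset.image (fun i => σ (k i)) Finset.univ)
      (fun i => Finset.mem_image_of_mem _ (Finset.mem_univ i))
    have hdisj : Disjoint I₀ (Finset.image (fun i => σ (k i)) Finset.univ) := by
      rw [Finset.disjoint_right]
      intro y hy
      simp only [Finset.mem_image, Finset.mem_univ, true_and] at hy
      obtain ⟨i, rfl⟩ := hy
      exact hσ i
    rw [hPS I₀ _ hdisj X hX _ hmem, hexch σ hfin m hm k B]
  · -- weak clustering → product state
    intro hWC I₁ I₂ hdisj X hX Y hY
    have hone : (inner ℂ Ω ((1 : H →L[ℂ] H) Ω) : ℂ) = 1 := by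
      rw [ContinuousLinearMap.one_apply, inner_self_eq_norm_sq_to_K, hΩ]
      norm_num
    have hY' := localAlgebra_le_span ι hY
    clear hY
    induction hY' using Submodule.span_induction with
    | zero => simp
    | add y z hy hz ihy ihz =>
        rw [mul_add]
        rw [ContinuousLinearMap.add_apply, ContinuousLinearMap.add_apply,
          inner_add_right, inner_add_right, ihy, ihz]
        ring
    | smul r y hy ihy =>
        rw [mul_smul_comm]
        rw [ContinuousLinearMap.smul_apply, ContinuousLinearMap.smul_apply,
          inner_smul_right, inner_smul_right, ihy]
        ring
    | mem M hM =>
        obtain ⟨l, hl, rfl⟩ := hM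
        rw [← List.ofFn_get l, List.map_ofFn, Function.comp_def]
        by_cases hl0 : l = []
        · subst hl0
          simp only [List.length_nil, List.ofFn_zero, List.prod_nil, mul_one]
          rw [hone, mul_one]
        · have hpos : 1 ≤ l.length := List.length_pos_iff.2 hl0
          have hgood : ∀ σ : Equiv.Perm ℤ, {x : ℤ | σ x ≠ x}.Finite →
              (∀ i : Fin l.length, σ ((l.get i).1) ∉ I₁) →
              (inner ℂ Ω ((X * (List.ofFn fun i =>
                  ι (σ ((l.get i).1)) ((l.get i).2)).prod) Ω) : ℂ)
                = inner ℂ Ω ((X * (List.ofFn fun t =>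
                  ι ((l.get t).1) ((l.get t).2)).prod) Ω) := by
            intro σ hfin hσ
            obtain ⟨h, hhfin, hfix, hK⟩ := exists_perm_extend σ I₁
              (Finset.image (fun t => (l.get t).1) Finset.univ)
              (by
                intro x hx
                simp only [Finset.mem_image, Finset.mem_univ, true_and] at hx
                obtain ⟨t, rfl⟩ := hx
                exact Finset.disjoint_left.1 hdisj.symm (hl _ (l.get_mem _)))
              (by
                intro x hx
                simp only [Finset.mem_image, Finset.mem_univ, true_and] at hx
                obtain ⟨t, rfl⟩ := hx
                exact hσ t)
            have hrw : ∀ i : Fin l.length, h ((l.get i).1) = σ ((l.get i).1) := fun i =>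
              hK _ (Finset.mem_image_of_mem _ (Finset.mem_univ i))
            have hX' := localAlgebra_le_span ι hX
            clear hX
            induction hX' using Submodule.span_induction with
            | zero => simp
            | add x y hx hy ihx ihy =>
                rw [add_mul, add_mul, ContinuousLinearMap.add_apply,
                  ContinuousLinearMap.add_apply, inner_add_right, inner_add_right, ihx, ihy]
            | smul r x hx ihx =>
                rw [smul_mul_assoc, smul_mul_assoc, ContinuousLinearMap.smul_apply,
                  ContinuousLinearMap.smul_apply, inner_smul_right, inner_smul_right, ihx]
            | mem Z hZ =>
                obtain ⟨l₂, hl₂, rfl⟩ := hZ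
                rw [← List.ofFn_get l₂, List.map_ofFn, Function.comp_def]
                have hfixj : ∀ t : Fin l₂.length, h ((l₂.get t).1) = (l₂.get t).1 :=
                  fun t => hfix _ (hl₂ _ (l₂.get_mem _))
                have e1 := exch_pair ι Ω hexch hpos
                  (fun t => (l₂.get t).1) (fun t => (l₂.get t).2)
                  (fun t => (l.get t).1) (fun t => (l.get t).2) h hhfin hfixj
                simp only [hrw] at e1
                exact e1
          have h1 := hWC I₁ X hX l.length hpos
            (fun t => (l.get t).1) (fun t => (l.get t).2)
          have h2 := core ι Ω hΩ I₁ X l.length hpos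
            (fun t => (l.get t).1) (fun t => (l.get t).2)
            (inner ℂ Ω ((X * (List.ofFn fun t =>
              ι ((l.get t).1) ((l.get t).2)).prod) Ω)) hgood
          exact tendsto_nhds_unique h2 h1
end

section
/- Let (𝔄, H, (ι_j)_{j∈ℤ}, Ω) be a stationary stochastic process satisfying the block singleton condition: ⟨XYZΩ, Ω⟩ = ⟨XZΩ, Ω⟩·⟨YΩ, Ω⟩ whenever I₁, I₂, I₃ ⊆ ℤ are finite with (I₁ ∪ I₃) ∩ I₂ = ∅, X ∈ 𝔄_{I₁}, Y ∈ 𝔄_{I₂} and Z ∈ 𝔄_{I₃}. Then the process converges to equilibrium along the shift: for all finite I₁, I₃ ⊆ ℤ, X ∈ 𝔄_{I₁}, Z ∈ 𝔄_{I₃}, every m ≥ 1, k₁,…,k_m ∈ ℤ and B₁,…,B_m ∈ 𝔄, one has lim_{n→∞} (1/n) Σ_{k=0}^{n−1} ⟨X · ι_{k₁+k}(B₁)⋯ι_{k_m+k}(B_m) · Z Ω, Ω⟩ = ⟨XZΩ, Ω⟩·⟨ι_{k₁}(B₁)⋯ι_{k_m}(B_m)Ω, Ω⟩. -/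
open Filter

variable {A H : Type*} [NormedRing A] [StarRing A] [CStarRing A]
  [NormedAlgebra ℂ A] [StarModule ℂ A] [CompleteSpace A]
  [NormedAddCommGroup H] [InnerProductSpace ℂ H] [CompleteSpace H]

lemma mem_localAlgebra (ι : ℤ → A →⋆ₐ[ℂ] (H →L[ℂ] H)) {I : Finset ℤ} {j : ℤ}
    (hj : j ∈ I) (a : A) : ι j a ∈ localAlgebra ι I := by
  apply StarAlgebra.subset_adjoin
  exact Set.mem_biUnion hj ⟨a, rfl⟩

lemma prod_mem_localAlgebra (ι : ℤ → A →⋆ₐ[ℂ] (H →L[ℂ] H)) {m : ℕ}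
    (k : Fin m → ℤ) (B : Fin m → A) (l : ℤ) :
    (List.ofFn fun i => ι (k i + l) (B i)).prod ∈
      localAlgebra ι (Finset.image (fun i => k i + l) Finset.univ) := by
  apply list_prod_mem
  intro x hx
  simp only [List.mem_ofFn] at hx
  obtain ⟨i, rfl⟩ := hx
  exact mem_localAlgebra ι (Finset.mem_image_of_mem _ (Finset.mem_univ i)) _

/-- a stationary process satisfying the block singleton condition
converges to equilibrium along the Cesàro averages of the shift. -/
theorem stationary_blockSingleton_convergesToEquilibrium
    (ι : ℤ → A →⋆ₐ[ℂ] (H →L[ℂ] H)) (Ω : H) (hΩ : ‖Ω‖ = 1)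
    (hstat : ∀ n : ℕ, 1 ≤ n → ∀ (j : Fin n → ℤ) (a : Fin n → A),
      (inner ℂ Ω (((List.ofFn fun i => ι (j i + 1) (a i)).prod) Ω) : ℂ)
        = inner ℂ Ω (((List.ofFn fun i => ι (j i) (a i)).prod) Ω))
    (hbs : ∀ I₁ I₂ I₃ : Finset ℤ, Disjoint (I₁ ∪ I₃) I₂ →
      ∀ X ∈ localAlgebra ι I₁, ∀ Y ∈ localAlgebra ι I₂, ∀ Z ∈ localAlgebra ι I₃,
        (inner ℂ Ω ((X * Y * Z) Ω) : ℂ) = inner ℂ Ω ((X * Z) Ω) * inner ℂ Ω (Y Ω)) :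
    ∀ I₁ I₃ : Finset ℤ, ∀ X ∈ localAlgebra ι I₁, ∀ Z ∈ localAlgebra ι I₃,
      ∀ m : ℕ, 1 ≤ m → ∀ (k : Fin m → ℤ) (B : Fin m → A),
        Tendsto
          (fun n : ℕ => (n : ℂ)⁻¹ *
            ∑ l ∈ Finset.range n,
              (inner ℂ Ω ((X *
                (List.ofFn fun i => ι (k i + (l : ℤ)) (B i)).prod * Z) Ω) : ℂ))
          atTop
          (nhds ((inner ℂ Ω ((X * Z) Ω) : ℂ) *
            inner ℂ Ω (((List.ofFn fun i => ι (k i) (B i)).prod) Ω))) := by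
  intro I₁ I₃ X hX Z hZ m hm k B
  -- stationarity: the expectation of the shifted product is constant
  have hconst : ∀ l : ℕ,
      (inner ℂ Ω (((List.ofFn fun i => ι (k i + (l : ℤ)) (B i)).prod) Ω) : ℂ)
        = inner ℂ Ω (((List.ofFn fun i => ι (k i) (B i)).prod) Ω) := by
    intro l
    induction l with
    | zero => simp
    | succ l ih =>
      have := hstat m hm (fun i => k i + (l : ℤ)) B
      have h2 : (fun i => ι (k i + ((l : ℤ) + 1)) (B i))
          = fun i => ι (k i + (l : ℤ) + 1) (B i) := by
        funext i; ring_nf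
      push_cast
      have e : (fun i : Fin m => ι (k i + ((l : ℤ) + 1)) (B i))
          = fun i => ι (k i + (l : ℤ) + 1) (B i) := by
        funext i; congr 1; ring
      rw [e, this, ih]
  -- the target constant
  set T : ℂ := (inner ℂ Ω ((X * Z) Ω) : ℂ) *
      inner ℂ Ω (((List.ofFn fun i => ι (k i) (B i)).prod) Ω) with hT
  set f : ℕ → ℂ := fun l =>
    (inner ℂ Ω ((X * (List.ofFn fun i => ι (k i + (l : ℤ)) (B i)).prod * Z) Ω) : ℂ) with hf
  -- the summand is eventually equal to T
  have hev : ∀ᶠ l in atTop, f l = T := by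
    set Bad : Finset ℤ := (I₁ ∪ I₃).biUnion (fun j => Finset.univ.image fun i => j - k i)
      with hBad
    have : ∀ l : ℕ, (l : ℤ) ∉ Bad → f l = T := by
      intro l hl
      have hdisj : Disjoint (I₁ ∪ I₃) (Finset.image (fun i => k i + (l : ℤ)) Finset.univ) := by
        rw [Finset.disjoint_right]
        intro j hj hj'
        simp only [Finset.mem_image, Finset.mem_univ, true_and] at hj
        obtain ⟨i, rfl⟩ := hj
        apply hl
        rw [hBad]
        refine Finset.mem_biUnion.2 ⟨k i + l, hj', ?_⟩
        simp only [Finset.mem_image, Finset.mem_univ, true_and]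
        exact ⟨i, by ring⟩
      have := hbs I₁ _ I₃ hdisj X hX _ (prod_mem_localAlgebra ι k B (l : ℤ)) Z hZ
      simp only [hf, hT]
      rw [this, hconst l]
    have hfin : ∀ᶠ l : ℕ in atTop, (l : ℤ) ∉ Bad := by
      rcases Bad.eq_empty_or_nonempty with h | h
      · filter_upwards with l; simp [h]
      · obtain ⟨M, hM⟩ : ∃ M : ℕ, ∀ x ∈ Bad, x < (M : ℤ) := by
          refine ⟨(Bad.max' h).toNat + 1, fun x hx => ?_⟩
          have := Finset.le_max' Bad x hx
          push_cast
          omega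
        filter_upwards [eventually_ge_atTop M] with l hl hmem
        have := hM _ hmem
        omega
    filter_upwards [hfin] with l hl using this l hl
  have hfT : Tendsto f atTop (nhds T) :=
    Tendsto.congr' (hev.mono fun l h => h.symm) tendsto_const_nhds
  have := hfT.cesaro_smul
  refine this.congr fun n => ?_
  rw [← Complex.ofReal_natCast, Complex.real_smul, Complex.ofReal_inv, Complex.ofReal_natCast]
end

section
/- Let λ > 0 and let φ_λ : ℂ[F(ℕ)] → ℂ be the linear functional on the group algebra of the free group on ℕ defined on group elements by φ_λ(w) := exp(−λ|w|), where |w| is the reduced word length of w, extended linearly. If S, T ⊆ ℕ are disjoint sets of generator indices, x is a finite linear combination of group elements whose reduced words use only generators with indices in S, and y is a finite linear combination of group elements whose reduced words use only generators with indices in T, then φ_λ(x·y) = φ_λ(x)·φ_λ(y) (the product state condition for Haagerup states). -/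
/-- The Haagerup functional `φ_λ` on the group algebra `ℂ[F(ℕ)]`, defined on group
elements by `φ_λ(w) = exp (-λ |w|)` (where `|w|` is the reduced word length) and
extended linearly. -/
noncomputable def haagerupFunctional (l : ℝ) (x : MonoidAlgebra ℂ (FreeGroup ℕ)) : ℂ :=
  ∑ w ∈ x.coeff.support, x.coeff w * (Real.exp (-l * (FreeGroup.norm w : ℝ)) : ℂ)

namespace HaagerupAux

open FreeGroup List

/-- No cancellation between two adjacent letters. -/
def noCancel (a b : ℕ × Bool) : Prop := ¬ (a.1 = b.1 ∧ a.2 = !b.2)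

lemma exists_of_not_chain' : ∀ (L : List (ℕ × Bool)), ¬ List.Chain' noCancel L →
    ∃ L₂ L₃ x b, L = L₂ ++ (x, b) :: (x, !b) :: L₃
  | [], h => absurd List.isChain_nil h
  | [a], h => absurd (List.isChain_singleton a) h
  | a :: c :: tl, h => by
    change ¬ List.IsChain noCancel (a :: c :: tl) at h
    rw [List.isChain_cons_cons] at h
    by_cases hac : noCancel a c
    · have htl : ¬ List.Chain' noCancel (c :: tl) := fun hc => h ⟨hac, hc⟩
      obtain ⟨L₂, L₃, x, b, hEq⟩ := exists_of_not_chain' (c :: tl) htl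
      exact ⟨a :: L₂, L₃, x, b, by rw [hEq]; rfl⟩
    · obtain ⟨h1, h2⟩ := not_not.mp hac
      refine ⟨[], tl, a.1, a.2, ?_⟩
      have hc : c = (a.1, !a.2) := by
        apply Prod.ext
        · exact h1.symm
        · simp [h2]
      simp [hc]

lemma chain'_of_reduce_eq {L : List (ℕ × Bool)} (h : FreeGroup.reduce L = L) :
    List.Chain' noCancel L := by
  by_contra hc
  obtain ⟨L₂, L₃, x, b, hEq⟩ := exists_of_not_chain' L hc
  exact FreeGroup.reduce.not (p := False) (h.trans hEq)

lemma reduce_eq_of_chain' : ∀ (L : List (ℕ × Bool)), List.Chain' noCancel L →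
    FreeGroup.reduce L = L
  | [], _ => rfl
  | a :: L, h => by
    obtain ⟨h1, h2⟩ := List.isChain_cons.mp h
    rw [FreeGroup.reduce.cons, reduce_eq_of_chain' L h2]
    cases L with
    | nil => rfl
    | cons hd tl =>
      have : ¬ (a.1 = hd.1 ∧ a.2 = !hd.2) := h1 hd rfl
      simp only [this, if_false]

lemma toWord_mul_disjoint {S T : Set ℕ} (hST : Disjoint S T) (u v : FreeGroup ℕ)
    (hu : ∀ p ∈ u.toWord, p.1 ∈ S) (hv : ∀ p ∈ v.toWord, p.1 ∈ T) :
    (u * v).toWord = u.toWord ++ v.toWord := by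
  have hmk : u * v = FreeGroup.mk (u.toWord ++ v.toWord) := by
    rw [← FreeGroup.mul_mk, FreeGroup.mk_toWord, FreeGroup.mk_toWord]
  rw [hmk, FreeGroup.toWord_mk]
  apply reduce_eq_of_chain'
  change List.IsChain noCancel (u.toWord ++ v.toWord)
  rw [List.isChain_append]
  refine ⟨chain'_of_reduce_eq (FreeGroup.reduce_toWord u),
    chain'_of_reduce_eq (FreeGroup.reduce_toWord v), ?_⟩
  intro p hp q hq
  have hpS : p.1 ∈ S := hu p (List.mem_of_mem_getLast? hp)
  have hqT : q.1 ∈ T := hv q (List.mem_of_mem_head? hq)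
  intro ⟨h1, _⟩
  exact Set.disjoint_left.mp hST hpS (h1 ▸ hqT)

lemma norm_mul_disjoint {S T : Set ℕ} (hST : Disjoint S T) (u v : FreeGroup ℕ)
    (hu : ∀ p ∈ u.toWord, p.1 ∈ S) (hv : ∀ p ∈ v.toWord, p.1 ∈ T) :
    FreeGroup.norm (u * v) = FreeGroup.norm u + FreeGroup.norm v := by
  unfold FreeGroup.norm
  rw [toWord_mul_disjoint hST u v hu hv, List.length_append]

end HaagerupAux

/-- the Haagerup states satisfy the product state condition: if `x` is
supported on words using only generators from `S`, `y` only generators from `T`, and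
`S` and `T` are disjoint, then `φ_λ(x·y) = φ_λ(x)·φ_λ(y)`. -/
theorem haagerup_product_state_condition (l : ℝ) (hl : 0 < l)
    (S T : Set ℕ) (hST : Disjoint S T)
    (x y : MonoidAlgebra ℂ (FreeGroup ℕ))
    (hx : ∀ w ∈ x.coeff.support, ∀ p ∈ FreeGroup.toWord w, p.1 ∈ S)
    (hy : ∀ w ∈ y.coeff.support, ∀ p ∈ FreeGroup.toWord w, p.1 ∈ T) :
    haagerupFunctional l (x * y) = haagerupFunctional l x * haagerupFunctional l y := by
  classical
  set E : FreeGroup ℕ → ℂ := fun w => (Real.exp (-l * (FreeGroup.norm w : ℝ)) : ℂ) with hE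
  have hφ : ∀ z : MonoidAlgebra ℂ (FreeGroup ℕ),
      haagerupFunctional l z = Finsupp.linearCombination ℂ E z.coeff := fun z => by
    simp [haagerupFunctional, Finsupp.linearCombination_apply, Finsupp.sum, hE, smul_eq_mul]
  rw [hφ, hφ, hφ, MonoidAlgebra.mul_def, MonoidAlgebra.coeff_finsuppSum, map_finsuppSum]
  simp_rw [MonoidAlgebra.coeff_finsuppSum, map_finsuppSum, MonoidAlgebra.coeff_single, Finsupp.linearCombination_single]
  rw [Finsupp.linearCombination_apply, Finsupp.linearCombination_apply]
  simp only [Finsupp.sum]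
  rw [Finset.sum_mul_sum]
  refine Finset.sum_congr rfl fun u hu => Finset.sum_congr rfl fun v hv => ?_
  have hnorm := HaagerupAux.norm_mul_disjoint hST u v (hx u hu) (hy v hv)
  have hEmul : E (u * v) = E u * E v := by
    simp only [hE, hnorm]
    push_cast
    rw [mul_add, Complex.exp_add]
  rw [hEmul, smul_eq_mul, smul_eq_mul, smul_eq_mul]
  ring
end

section
/- Let A be a unital C*-algebra, α a *-automorphism of A, and φ an α-invariant state on A which is weakly clustering, i.e. lim_{n→∞} (1/n) Σ_{k=0}^{n−1} φ(a·α^k(b)) = φ(a)·φ(b) for all a, b ∈ A. Then φ is an extreme point of the convex set of all α-invariant states on A (i.e. φ is ergodic). -/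
open Filter
open scoped ComplexOrder

variable {A : Type*} [NormedRing A] [StarRing A] [CStarRing A]
  [NormedAlgebra ℂ A] [StarModule ℂ A] [CompleteSpace A]

/-- A state on a unital C*-algebra: a linear functional `ω` with `ω 1 = 1` and
`ω (a* a) ≥ 0` for all `a`. -/
def IsState (ω : A →ₗ[ℂ] ℂ) : Prop :=
  ω 1 = 1 ∧ ∀ a : A, 0 ≤ ω (star a * a)

lemma aux_im_zero (ψ : A →ₗ[ℂ] ℂ) (hpos : ∀ a : A, 0 ≤ ψ (star a * a)) (x : A) :
    (ψ (star x * x)).im = 0 := ((Complex.nonneg_iff.mp (hpos x)).2).symm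

lemma aux_selfadj (ψ : A →ₗ[ℂ] ℂ) (hpos : ∀ a : A, 0 ≤ ψ (star a * a)) (a : A) :
    ψ (star a) = (starRingEnd ℂ) (ψ a) := by
  have him := aux_im_zero ψ hpos
  have h1A : (star (a + 1) * (a + 1) : A) = star a * a + (star a + (a + 1)) := by
    simp only [star_add, star_one]; noncomm_ring
  have h2A : (star (a + Complex.I • 1) * (a + Complex.I • 1) : A)
      = star a * a + (Complex.I • star a + ((-Complex.I) • a + 1)) := by
    simp only [star_add, star_smul, star_one, Complex.star_def, Complex.conj_I]
    simp only [add_mul, mul_add, smul_mul_assoc, mul_smul_comm, one_mul, mul_one, smul_smul]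
    simp only [smul_add, smul_smul]
    rw [show Complex.I * -Complex.I = 1 by simp [Complex.I_mul_I]]
    simp only [one_smul]
    abel
  have e1 := him (a + 1)
  rw [h1A] at e1
  simp only [map_add, map_smul, map_one] at e1
  have e0 := him 1
  simp only [star_one, one_mul] at e0
  have e2 := him (a + Complex.I • 1)
  rw [h2A] at e2
  simp only [map_add, map_smul, map_one, smul_eq_mul] at e2
  have haa := him a
  -- now pure complex arithmetic
  set u := ψ a
  set v := ψ (star a)
  apply Complex.ext
  · have : (Complex.I * v + (-Complex.I * u + ψ 1)).im = 0 := by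
      have := e2; have h3 := him a
      simp only [Complex.add_im] at this ⊢
      linarith [e2, him a, Complex.add_im (ψ (star a * a)) (Complex.I * v + (-Complex.I * u + ψ 1))]
    simp only [Complex.add_im, Complex.mul_im, Complex.I_re, Complex.I_im, Complex.neg_re,
      Complex.neg_im] at this
    simp only [Complex.conj_re]
    linarith [this, e0]
  · have : (v + (u + ψ 1)).im = 0 := by
      simp only [Complex.add_im] at e1 ⊢
      linarith [e1, him a]
    simp only [Complex.add_im] at this
    simp only [Complex.conj_im]
    linarith [this, e0]


lemma aux_cs (ψ : A →ₗ[ℂ] ℂ) (hpos : ∀ a : A, 0 ≤ ψ (star a * a)) (y : A) :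
    Complex.normSq (ψ y) ≤ (ψ 1).re * (ψ (star y * y)).re := by
  set N : ℝ := Complex.normSq (ψ y) with hNdef
  set P : ℝ := (ψ 1).re
  set Q : ℝ := (ψ (star y * y)).re with hQdef
  have hexp : ∀ t : ℂ, (star (1 + t • y) * (1 + t • y) : A)
      = 1 + (t • y + ((starRingEnd ℂ) t • star y
          + (t * (starRingEnd ℂ) t) • (star y * y))) := by
    intro t
    simp only [star_add, star_one, star_smul, RCLike.star_def, add_mul, mul_add, one_mul,
      mul_one, smul_mul_assoc, mul_smul_comm, smul_smul, smul_add]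
    abel
  have key : ∀ s : ℝ, 0 ≤ P - 2*s*N + s^2*N*Q := by
    intro s
    have h := hpos (1 + (-(s:ℂ) * (starRingEnd ℂ) (ψ y)) • y)
    rw [hexp _] at h
    set t : ℂ := -(s:ℂ) * (starRingEnd ℂ) (ψ y) with htdef
    have hct : (starRingEnd ℂ) t = -(s:ℂ) * (ψ y) := by
      simp [htdef, map_mul, Complex.conj_ofReal]
    have hN : ((N : ℝ) : ℂ) = ψ y * (starRingEnd ℂ) (ψ y) := (Complex.mul_conj _).symm
    have h2 : (0:ℂ) ≤ ψ 1 - ((2*s*N : ℝ) : ℂ) + ((s^2*N : ℝ) : ℂ) * ψ (star y * y) := by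
      have := h
      simp only [map_add, map_smul, smul_eq_mul] at this
      convert this using 1
      rw [aux_selfadj ψ hpos y, htdef, hct]
      push_cast
      rw [hN]
      ring
    have h3 := (Complex.nonneg_iff.mp h2).1
    have him1 : (ψ 1).im = 0 := by
      have := aux_im_zero ψ hpos 1; simpa using this
    have himQ : (ψ (star y * y)).im = 0 := aux_im_zero ψ hpos y
    simp only [Complex.add_re, Complex.sub_re, Complex.ofReal_re, Complex.mul_re,
      Complex.ofReal_im, himQ, zero_mul, mul_zero, sub_zero] at h3
    convert h3 using 2 <;> simp [hQdef]
  have hN0 : 0 ≤ N := Complex.normSq_nonneg _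
  have hQ0 : 0 ≤ Q := (Complex.nonneg_iff.mp (hpos y)).1
  rcases eq_or_lt_of_le hQ0 with hQ | hQ
  · -- Q = 0 : show N ≤ 0 i.e. N = 0
    rcases eq_or_lt_of_le hN0 with hN | hN
    · nlinarith [key 0]
    · have h := key ((P+1)/(2*N))
      rw [← hQ] at h
      have h2N : (0:ℝ) < 2*N := by linarith
      have hval : 2*((P+1)/(2*N))*N = P+1 := by field_simp
      nlinarith [h, hval]
  · have := key (1/Q)
    have h1 : 0 ≤ P - 2*(1/Q)*N + (1/Q)^2*N*Q := this
    have h2 : (1/Q)^2*N*Q = N/Q := by field_simp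
    rw [h2] at h1
    have : 0 ≤ P*Q - 2*N + N := by
      have := mul_le_mul_of_nonneg_right (by linarith : 2*(1/Q)*N - N/Q ≤ P) (le_of_lt hQ)
      calc (0:ℝ) = (2*(1/Q)*N - N/Q)*Q - N := by field_simp; ring
        _ ≤ P*Q - N := by linarith
        _ = P*Q - 2*N + N := by ring
    linarith

lemma aux_natCast_inv_tendsto :
    Tendsto (fun n : ℕ => ((n:ℂ))⁻¹) atTop (nhds 0) := by
  have h := tendsto_inv_atTop_nhds_zero_nat (𝕜 := ℝ)
  have h2 : Tendsto (fun n : ℕ => (((n:ℝ)⁻¹ : ℝ) : ℂ)) atTop (nhds ((0:ℝ):ℂ)) :=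
    (Complex.continuous_ofReal.tendsto _).comp h
  simpa [Complex.ofReal_inv] using h2

lemma aux_cesaro_weighted (a : ℕ → ℂ) (L : ℂ) (ha : Tendsto a atTop (nhds L)) :
    Tendsto (fun n : ℕ => (((n:ℂ))^2)⁻¹ * ∑ m ∈ Finset.range n, (((m:ℕ)+1 : ℂ)) * a (m+1))
      atTop (nhds (L/2)) := by
  have hsplit : ∀ n : ℕ, (((n:ℂ))^2)⁻¹ * ∑ m ∈ Finset.range n, (((m:ℕ)+1:ℂ)) * a (m+1)
      = (((n:ℂ))^2)⁻¹ * (∑ m ∈ Finset.range n, (((m:ℕ)+1:ℂ))) * L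
        + (((n:ℂ))^2)⁻¹ * ∑ m ∈ Finset.range n, (((m:ℕ)+1:ℂ)) * (a (m+1) - L) := by
    intro n
    rw [Finset.mul_sum, Finset.mul_sum, Finset.sum_mul, Finset.mul_sum, ← Finset.sum_add_distrib]
    congr 1; ext m; ring
  -- Gauss sum
  have hgauss : ∀ n : ℕ, (∑ m ∈ Finset.range n, (((m:ℕ)+1:ℂ))) = (n:ℂ)*((n:ℂ)+1)/2 := by
    intro n
    induction n with
    | zero => simp
    | succ n ih => rw [Finset.sum_range_succ, ih]; push_cast; ring
  have hpart1 : Tendsto (fun n : ℕ => (((n:ℂ))^2)⁻¹ * (∑ m ∈ Finset.range n, (((m:ℕ)+1:ℂ))) * L)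
      atTop (nhds (L/2)) := by
    have heq : ∀ᶠ n : ℕ in atTop, (1/2 + ((n:ℂ))⁻¹/2) * L
        = (((n:ℂ))^2)⁻¹ * (∑ m ∈ Finset.range n, (((m:ℕ)+1:ℂ))) * L := by
      filter_upwards [eventually_ge_atTop 1] with n hn
      have hn0 : ((n:ℂ)) ≠ 0 := Nat.cast_ne_zero.mpr (by omega)
      rw [hgauss]
      field_simp
    have hlim : Tendsto (fun n : ℕ => (1/2 + ((n:ℂ))⁻¹/2) * L) atTop (nhds ((1/2+0/2) * L)) := by
      exact (((tendsto_const_nhds).add (aux_natCast_inv_tendsto.div_const 2)).mul tendsto_const_nhds)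
    simp only [zero_div, add_zero] at hlim
    have hhalf : (1/2 + (0:ℂ)) * L = L/2 := by ring
    rw [show ((1:ℂ)/2) * L = L/2 from by ring] at hlim
    exact Tendsto.congr' heq hlim
  have hpart2 : Tendsto (fun n : ℕ => (((n:ℂ))^2)⁻¹ * ∑ m ∈ Finset.range n, (((m:ℕ)+1:ℂ)) * (a (m+1) - L))
      atTop (nhds 0) := by
    rw [tendsto_zero_iff_norm_tendsto_zero]
    have hshift : Tendsto (fun m : ℕ => ‖a (m+1) - L‖) atTop (nhds 0) := by
      have h1 : Tendsto (fun m : ℕ => a (m+1)) atTop (nhds L) :=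
        ha.comp (tendsto_add_atTop_nat 1)
      have h2 : Tendsto (fun m : ℕ => a (m+1) - L) atTop (nhds 0) := by
        simpa using h1.sub_const L
      simpa using h2.norm
    have hces := hshift.cesaro
    apply squeeze_zero (fun n => norm_nonneg _)
      (g := fun n : ℕ => (n:ℝ)⁻¹ * ∑ m ∈ Finset.range n, ‖a (m+1) - L‖) _ hces
    intro n
    show _ ≤ (n:ℝ)⁻¹ * ∑ m ∈ Finset.range n, ‖a (m+1) - L‖
    calc ‖(((n:ℂ))^2)⁻¹ * ∑ m ∈ Finset.range n, (((m:ℕ)+1:ℂ)) * (a (m+1) - L)‖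
        = (((n:ℝ))^2)⁻¹ * ‖∑ m ∈ Finset.range n, (((m:ℕ)+1:ℂ)) * (a (m+1) - L)‖ := by
          rw [norm_mul, norm_inv, norm_pow, Complex.norm_natCast]
      _ ≤ (((n:ℝ))^2)⁻¹ * ∑ m ∈ Finset.range n, (n:ℝ) * ‖a (m+1) - L‖ := by
          apply mul_le_mul_of_nonneg_left _ (by positivity)
          refine le_trans (norm_sum_le _ _) (Finset.sum_le_sum fun m hm => ?_)
          rw [norm_mul]
          apply mul_le_mul_of_nonneg_right _ (norm_nonneg _)
          have hmlt := Finset.mem_range.mp hm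
          have hle : ((m:ℝ) + 1) ≤ (n:ℝ) := by exact_mod_cast hmlt
          calc ‖(((m:ℕ)+1:ℂ))‖ = ((m:ℝ)+1 : ℝ) := by
                rw [show (((m:ℕ)+1:ℂ)) = (((m+1:ℕ)):ℂ) by push_cast; ring, Complex.norm_natCast]
                push_cast; ring
            _ ≤ (n:ℝ) := hle
      _ = (n:ℝ)⁻¹ * ∑ m ∈ Finset.range n, ‖a (m+1) - L‖ := by
          rw [← Finset.mul_sum, ← mul_assoc]
          rcases Nat.eq_zero_or_pos n with h | h
          · simp [h]
          · have hn0 : (n:ℝ) ≠ 0 := Nat.cast_ne_zero.mpr (by omega)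
            field_simp
  have := hpart1.add hpart2
  rw [add_zero] at this
  exact Tendsto.congr (fun n => (hsplit n).symm) this

lemma aux_iter_mul (α : A ≃⋆ₐ[ℂ] A) (j : ℕ) (x y : A) :
    (⇑α)^[j] (x * y) = (⇑α)^[j] x * (⇑α)^[j] y := by
  induction j with
  | zero => simp
  | succ j ih => simp [Function.iterate_succ_apply', ih, map_mul]

lemma aux_iter_star (α : A ≃⋆ₐ[ℂ] A) (j : ℕ) (x : A) :
    (⇑α)^[j] (star x) = star ((⇑α)^[j] x) := by
  induction j with
  | zero => rfl
  | succ j ih => simp [Function.iterate_succ_apply', ih, map_star]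

lemma aux_iter_inv (φ : A →ₗ[ℂ] ℂ) (α : A ≃⋆ₐ[ℂ] A) (hinv : ∀ a : A, φ (α a) = φ a)
    (j : ℕ) (x : A) : φ ((⇑α)^[j] x) = φ x := by
  induction j with
  | zero => rfl
  | succ j ih => rw [Function.iterate_succ_apply', hinv, ih]

lemma aux_sum_identity (s : ℕ → ℂ) (f : ℕ → ℕ → ℂ)
    (hup : ∀ j k, j ≤ k → f j k = s (k - j))
    (hdn : ∀ j k, k < j → f j k = (starRingEnd ℂ) (s (j - k))) (n : ℕ) :
    ∑ j ∈ Finset.range n, ∑ k ∈ Finset.range n, f j k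
      = ∑ j ∈ Finset.range n, ((∑ d ∈ Finset.range (j+1), s d)
          + (starRingEnd ℂ) (∑ d ∈ Finset.range (j+1), s d))
        - n • (starRingEnd ℂ) (s 0) := by
  have inner : ∀ j < n, ∑ k ∈ Finset.range n, f j k
      = (∑ d ∈ Finset.range (n-j), s d)
        + ((starRingEnd ℂ) (∑ d ∈ Finset.range (j+1), s d) - (starRingEnd ℂ) (s 0)) := by
    intro j hj
    have h0 : ∑ k ∈ Finset.range n, f j k
        = ∑ k ∈ Finset.Ico 0 j, f j k + ∑ k ∈ Finset.Ico j n, f j k := by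
      rw [Finset.sum_Ico_consecutive (f j) (Nat.zero_le j) (le_of_lt hj), ← Finset.range_eq_Ico]
    have h2 : ∑ k ∈ Finset.Ico j n, f j k = ∑ d ∈ Finset.range (n-j), s d := by
      rw [Finset.sum_Ico_eq_sum_range]
      exact Finset.sum_congr rfl fun i _ => by
        rw [hup j (j+i) (Nat.le_add_right _ _), Nat.add_sub_cancel_left]
    have h3 : ∑ k ∈ Finset.Ico 0 j, f j k
        = (starRingEnd ℂ) (∑ d ∈ Finset.range (j+1), s d) - (starRingEnd ℂ) (s 0) := by
      rw [← Finset.range_eq_Ico]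
      have e1 : ∑ k ∈ Finset.range j, f j k
          = ∑ k ∈ Finset.range j, (starRingEnd ℂ) (s (k+1)) := by
        rw [← Finset.sum_range_reflect (fun k => (starRingEnd ℂ) (s (k+1))) j]
        exact Finset.sum_congr rfl fun k hk => by
          have hk' := Finset.mem_range.mp hk
          rw [hdn j k hk']
          congr 2
          omega
      rw [e1, ← map_sum, ← map_sub]
      congr 1
      rw [Finset.sum_range_succ' s j]
      ring
    rw [h0, h2, h3]
    ring
  rw [Finset.sum_congr rfl fun j hj => inner j (Finset.mem_range.mp hj)]
  rw [Finset.sum_add_distrib, Finset.sum_sub_distrib]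
  have hrefl : ∑ j ∈ Finset.range n, (∑ d ∈ Finset.range (n-j), s d)
      = ∑ j ∈ Finset.range n, (∑ d ∈ Finset.range (j+1), s d) := by
    rw [← Finset.sum_range_reflect (fun j => ∑ d ∈ Finset.range (j+1), s d) n]
    exact Finset.sum_congr rfl fun j hj => by
      have hlt := Finset.mem_range.mp hj
      rw [show n - 1 - j + 1 = n - j from by omega]
  rw [hrefl, Finset.sum_const, Finset.card_range, Finset.sum_add_distrib]
  ring_nf

lemma aux_key (α : A ≃⋆ₐ[ℂ] A) (φ : A →ₗ[ℂ] ℂ) (hstate : IsState φ)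
    (hinv : ∀ a : A, φ (α a) = φ a) (b : A)
    (hS : Tendsto (fun n : ℕ => (n : ℂ)⁻¹ * ∑ k ∈ Finset.range n, φ (star b * (⇑α)^[k] b))
      atTop (nhds (φ (star b) * φ b))) :
    Tendsto (fun n : ℕ =>
      φ (star ((n:ℂ)⁻¹ • (∑ k ∈ Finset.range n, (⇑α)^[k] b) - φ b • 1)
        * ((n:ℂ)⁻¹ • (∑ k ∈ Finset.range n, (⇑α)^[k] b) - φ b • 1)))
      atTop (nhds 0) := by
  obtain ⟨hone, hpos⟩ := hstate
  set s : ℕ → ℂ := fun d => φ (star b * (⇑α)^[d] b) with hsdef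
  set S : ℕ → ℂ := fun m => ∑ d ∈ Finset.range m, s d with hSdef
  set β : ℂ := φ b with hβdef
  have hφstar : φ (star b) = (starRingEnd ℂ) β := aux_selfadj φ hpos b
  set L : ℂ := (starRingEnd ℂ) β * β with hLdef
  have hLconj : (starRingEnd ℂ) L = L := by
    rw [hLdef, map_mul, Complex.conj_conj]; ring
  have hS' : Tendsto (fun m : ℕ => (m:ℂ)⁻¹ * S m) atTop (nhds L) := by
    rw [hLdef, ← hφstar]; exact hS
  -- Cesàro parts
  have hc : Tendsto (fun n : ℕ => (((n:ℂ))^2)⁻¹ * ∑ j ∈ Finset.range n, S (j+1))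
      atTop (nhds (L/2)) := by
    have h := aux_cesaro_weighted (fun m => (m:ℂ)⁻¹ * S m) L hS'
    apply h.congr
    intro n
    congr 1
    refine Finset.sum_congr rfl fun m _ => ?_
    rw [show ((m:ℂ)+1) = (((m+1:ℕ)):ℂ) by push_cast; ring]
    rw [mul_inv_cancel_left₀ (Nat.cast_ne_zero.mpr (Nat.succ_ne_zero m))]
  have hcconj : Tendsto (fun n : ℕ => (((n:ℂ))^2)⁻¹
      * ∑ j ∈ Finset.range n, (starRingEnd ℂ) (S (j+1))) atTop (nhds (L/2)) := by
    have h2 : Tendsto (fun n : ℕ => (starRingEnd ℂ)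
        ((((n:ℂ))^2)⁻¹ * ∑ j ∈ Finset.range n, S (j+1))) atTop
        (nhds ((starRingEnd ℂ) (L/2))) := (Complex.continuous_conj.tendsto _).comp hc
    have h3 : (starRingEnd ℂ) (L/2) = L/2 := by
      rw [map_div₀, hLconj, map_ofNat]
    rw [h3] at h2
    apply h2.congr
    intro n
    rw [map_mul, map_sum]
    congr 1
    rw [map_inv₀, map_pow, Complex.conj_natCast]
  have hn3 : Tendsto (fun n : ℕ => (n:ℂ)⁻¹ * (starRingEnd ℂ) (s 0)) atTop (nhds 0) := by
    simpa using aux_natCast_inv_tendsto.mul_const ((starRingEnd ℂ) (s 0))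
  have htotal : Tendsto (fun n : ℕ =>
      (((n:ℂ))^2)⁻¹ * ∑ j ∈ Finset.range n, S (j+1)
      + (((n:ℂ))^2)⁻¹ * ∑ j ∈ Finset.range n, (starRingEnd ℂ) (S (j+1))
      - (n:ℂ)⁻¹ * (starRingEnd ℂ) (s 0) - L) atTop (nhds 0) := by
    have h := ((hc.add hcconj).sub hn3).sub_const L
    have : L/2 + L/2 - 0 - L = 0 := by ring
    rwa [this] at h
  apply Tendsto.congr' _ htotal
  filter_upwards [eventually_ge_atTop 1] with n hn
  have hn0 : ((n:ℂ)) ≠ 0 := Nat.cast_ne_zero.mpr (by omega)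
  set T : A := ∑ k ∈ Finset.range n, (⇑α)^[k] b with hTdef
  have hA : star ((n:ℂ)⁻¹ • T - β • 1) * ((n:ℂ)⁻¹ • T - β • 1)
      = ((n:ℂ)⁻¹ * (n:ℂ)⁻¹) • (star T * T) - ((n:ℂ)⁻¹ * β) • star T
        - ((starRingEnd ℂ) β * (n:ℂ)⁻¹) • T + ((starRingEnd ℂ) β * β) • 1 := by
    simp only [star_sub, star_smul, star_one, RCLike.star_def, map_inv₀,
      Complex.conj_natCast, sub_mul, mul_sub, smul_mul_assoc, mul_smul_comm, smul_smul,
      one_mul, mul_one]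
    module
  have hφT : φ T = (n:ℂ) * β := by
    rw [hTdef, map_sum]
    rw [Finset.sum_congr rfl fun k _ => aux_iter_inv φ α hinv k b]
    rw [Finset.sum_const, Finset.card_range, nsmul_eq_mul]
  have hst : star T = ∑ k ∈ Finset.range n, (⇑α)^[k] (star b) := by
    rw [hTdef, star_sum]
    exact Finset.sum_congr rfl fun k _ => (aux_iter_star α k b).symm
  have hTT : φ (star T * T)
      = ∑ j ∈ Finset.range n, ((∑ d ∈ Finset.range (j+1), s d)
          + (starRingEnd ℂ) (∑ d ∈ Finset.range (j+1), s d))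
        - n • (starRingEnd ℂ) (s 0) := by
    have hexp : φ (star T * T) = ∑ j ∈ Finset.range n, ∑ k ∈ Finset.range n,
        φ ((⇑α)^[j] (star b) * (⇑α)^[k] b) := by
      rw [hst, hTdef, Finset.sum_mul_sum, map_sum]
      exact Finset.sum_congr rfl fun j _ => map_sum φ _ _
    rw [hexp]
    apply aux_sum_identity s (fun j k => φ ((⇑α)^[j] (star b) * (⇑α)^[k] b))
    · intro j k hjk
      have hb : (⇑α)^[k] b = (⇑α)^[j] ((⇑α)^[k-j] b) := by
        rw [← Function.iterate_add_apply]
        congr 1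
        omega
      rw [hb, ← aux_iter_mul, aux_iter_inv φ α hinv]
    · intro j k hkj
      have hb : (⇑α)^[j] (star b) = (⇑α)^[k] ((⇑α)^[j-k] (star b)) := by
        rw [← Function.iterate_add_apply]
        congr 1
        omega
      rw [hb, ← aux_iter_mul, aux_iter_inv φ α hinv, aux_iter_star]
      have hz : star ((⇑α)^[j-k] b) * b = star (star b * (⇑α)^[j-k] b) := by
        rw [star_mul, star_star]
      rw [hz, aux_selfadj φ hpos]
  have hfold : ∀ j : ℕ, (∑ d ∈ Finset.range (j+1), s d) = S (j+1) := fun j => rfl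
  simp only [hfold] at hTT
  -- assemble
  rw [hA]
  simp only [map_sub, map_add, map_smul, smul_eq_mul, hone]
  rw [hTT, hφT, aux_selfadj φ hpos T, hφT, map_mul, Complex.conj_natCast]
  rw [Finset.sum_add_distrib, nsmul_eq_mul, hLdef]
  field_simp
  ring

/-- a weakly clustering `α`-invariant state is an extreme point of the
convex set of `α`-invariant states (i.e. it is ergodic). -/
theorem weaklyClustering_implies_ergodic (α : A ≃⋆ₐ[ℂ] A)
    (φ : A →ₗ[ℂ] ℂ) (hstate : IsState φ) (hinv : ∀ a : A, φ (α a) = φ a)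
    (hwc : ∀ a b : A,
      Tendsto (fun n : ℕ => (n : ℂ)⁻¹ * ∑ k ∈ Finset.range n, φ (a * (⇑α)^[k] b))
        atTop (nhds (φ a * φ b))) :
    φ ∈ Set.extremePoints ℝ
      {ψ : A →ₗ[ℂ] ℂ | IsState ψ ∧ ∀ a : A, ψ (α a) = ψ a} := by
  have main : ∀ (ψ : A →ₗ[ℂ] ℂ) (C : ℝ), IsState ψ → (∀ a : A, ψ (α a) = ψ a) →
      (∀ x : A, (ψ (star x * x)).re ≤ C * (φ (star x * x)).re) → ψ = φ := by
    intro ψ C hψ hψinv hbound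
    obtain ⟨hψ1, hψpos⟩ := hψ
    apply LinearMap.ext
    intro b
    set c : ℕ → A := fun n =>
      (n:ℂ)⁻¹ • (∑ k ∈ Finset.range n, (⇑α)^[k] b) - φ b • 1 with hcdef
    have hkey := aux_key α φ hstate hinv b (hwc (star b) b)
    have hre : Tendsto (fun n : ℕ => (φ (star (c n) * c n)).re) atTop (nhds 0) := by
      have h := (Complex.continuous_re.tendsto 0).comp hkey
      simpa only [Function.comp_def, Complex.zero_re] using h
    have hψre : Tendsto (fun n : ℕ => (ψ (star (c n) * c n)).re) atTop (nhds 0) := by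
      apply squeeze_zero (fun n => (Complex.nonneg_iff.mp (hψpos (c n))).1)
        (fun n => hbound (c n))
      simpa using hre.const_mul C
    have hcs : ∀ n : ℕ, Complex.normSq (ψ (c n)) ≤ (ψ (star (c n) * c n)).re := by
      intro n
      have := aux_cs ψ hψpos (c n)
      rwa [hψ1, Complex.one_re, one_mul] at this
    have heval : ∀ n : ℕ, 1 ≤ n → ψ (c n) = ψ b - φ b := by
      intro n hn
      have hn0 : ((n:ℂ)) ≠ 0 := Nat.cast_ne_zero.mpr (by omega)
      simp only [hcdef, map_sub, map_smul, map_sum, smul_eq_mul, hψ1, mul_one]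
      rw [Finset.sum_congr rfl fun k _ => aux_iter_inv ψ α hψinv k b,
        Finset.sum_const, Finset.card_range, nsmul_eq_mul, ← mul_assoc,
        inv_mul_cancel₀ hn0, one_mul]
    have hfinal : Complex.normSq (ψ b - φ b) ≤ 0 := by
      apply ge_of_tendsto hψre
      filter_upwards [eventually_ge_atTop 1] with n hn
      rw [← heval n hn]
      exact hcs n
    have hz : ψ b - φ b = 0 :=
      Complex.normSq_eq_zero.mp (le_antisymm hfinal (Complex.normSq_nonneg _))
    exact sub_eq_zero.mp hz
  constructor
  · exact ⟨hstate, hinv⟩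
  · rintro ψ₁ ⟨hψ₁s, hψ₁i⟩ ψ₂ ⟨hψ₂s, hψ₂i⟩ ⟨t, u, ht, hu, htu, hsum⟩
    have happ : ∀ x : A, t * (ψ₁ x).re + u * (ψ₂ x).re = (φ x).re := by
      intro x
      have h := congrArg (fun f : A →ₗ[ℂ] ℂ => ((f x).re)) hsum
      simpa [LinearMap.add_apply, LinearMap.smul_apply, Complex.add_re,
        Complex.real_smul, Complex.re_ofReal_mul] using h
    have hb1 : ∀ x : A, (ψ₁ (star x * x)).re ≤ t⁻¹ * (φ (star x * x)).re := by
      intro x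
      have h2 := (Complex.nonneg_iff.mp (hψ₂s.2 x)).1
      have hle : t * (ψ₁ (star x * x)).re ≤ (φ (star x * x)).re := by
        have := happ (star x * x)
        nlinarith [mul_nonneg hu.le h2]
      calc (ψ₁ (star x * x)).re = t⁻¹ * (t * (ψ₁ (star x * x)).re) := by
            field_simp
        _ ≤ t⁻¹ * (φ (star x * x)).re :=
            mul_le_mul_of_nonneg_left hle (inv_nonneg.mpr ht.le)
    have hb2 : ∀ x : A, (ψ₂ (star x * x)).re ≤ u⁻¹ * (φ (star x * x)).re := by
      intro x
      have h1 := (Complex.nonneg_iff.mp (hψ₁s.2 x)).1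
      have hle : u * (ψ₂ (star x * x)).re ≤ (φ (star x * x)).re := by
        have := happ (star x * x)
        nlinarith [mul_nonneg ht.le h1]
      calc (ψ₂ (star x * x)).re = u⁻¹ * (u * (ψ₂ (star x * x)).re) := by
            field_simp
        _ ≤ u⁻¹ * (φ (star x * x)).re :=
            mul_le_mul_of_nonneg_left hle (inv_nonneg.mpr hu.le)
    exact main ψ₁ t⁻¹ hψ₁s hψ₁i hb1
end

section
/- Let H be a complex Hilbert space, A a unital *-subalgebra of B(H), Ω ∈ H a unit vector which is cyclic for A (i.e. {aΩ : a ∈ A} is dense in H), and U a unitary operator on H with UΩ = Ω and U a U* ∈ A for every a ∈ A. Then the following are equivalent: (i) [weak clustering] for all a, b ∈ A, lim_{n→∞} (1/n) Σ_{k=0}^{n−1} ⟨a U^k b Ω, Ω⟩ = ⟨aΩ, Ω⟩·⟨bΩ, Ω⟩; (ii) every vector ξ ∈ H with Uξ = ξ is a scalar multiple of Ω. -/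
open Filter ContinuousLinearMap

/-- for a unital *-subalgebra `S ⊆ B(H)` with cyclic unit vector `Ω` and
a unitary `U` with `UΩ = Ω` and `U S U* ⊆ S`, weak clustering is equivalent to the
`U`-fixed vectors being the scalar multiples of `Ω`. -/
theorem weakClustering_iff_fixedVectors_trivial
    {H : Type*} [NormedAddCommGroup H] [InnerProductSpace ℂ H] [CompleteSpace H]
    (S : StarSubalgebra ℂ (H →L[ℂ] H)) (Ω : H) (hΩ : ‖Ω‖ = 1)
    (hcyc : Dense ((fun T : H →L[ℂ] H => T Ω) '' (S : Set (H →L[ℂ] H))))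
    (U : H →L[ℂ] H)
    (hU : U * adjoint U = 1 ∧ adjoint U * U = 1)
    (hUΩ : U Ω = Ω)
    (hUS : ∀ a ∈ S, U * a * adjoint U ∈ S) :
    (∀ a ∈ S, ∀ b ∈ S,
        Tendsto (fun n : ℕ => (n : ℂ)⁻¹ *
            ∑ k ∈ Finset.range n, (inner ℂ Ω ((a * U ^ k * b) Ω) : ℂ))
          atTop (nhds ((inner ℂ Ω (a Ω) : ℂ) * inner ℂ Ω (b Ω))))
      ↔
    (∀ ξ : H, U ξ = ξ → ∃ c : ℂ, ξ = c • Ω) := by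
  -- U is a contraction
  have hadj : ∀ x : H, adjoint U (U x) = x := fun x => by
    have := congrArg (fun T : H →L[ℂ] H => T x) hU.2
    simpa [mul_apply] using this
  have hnorm : ‖U‖ ≤ 1 := by
    refine opNorm_le_bound _ zero_le_one fun x => ?_
    have hisom : (inner ℂ (U x) (U x) : ℂ) = inner ℂ x x := by
      rw [← adjoint_inner_right, hadj]
    have h1 : ‖U x‖ ^ 2 = ‖x‖ ^ 2 := by
      rw [inner_self_eq_norm_sq_to_K, inner_self_eq_norm_sq_to_K] at hisom
      exact_mod_cast hisom
    have h2 := congrArg Real.sqrt h1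
    rw [Real.sqrt_sq (norm_nonneg _), Real.sqrt_sq (norm_nonneg _)] at h2
    simp [h2]
  set F := U.eqLocus (1 : H →L[ℂ] H) with hF
  have hmemF : ∀ x : H, x ∈ F ↔ U x = x := fun x => by simp [hF, LinearMap.mem_eqLocus]
  set P : H → H := fun x => (F.orthogonalProjectionOnto x : H) with hP
  -- the key convergence: the Cesàro averages converge to the projection pairing
  have key : ∀ a b : H →L[ℂ] H,
      Tendsto (fun n : ℕ => (n : ℂ)⁻¹ *
          ∑ k ∈ Finset.range n, (inner ℂ Ω ((a * U ^ k * b) Ω) : ℂ))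
        atTop (nhds (inner ℂ (adjoint a Ω) (P (b Ω)))) := by
    intro a b
    have h1 := U.tendsto_birkhoffAverage_orthogonalProjection hnorm (b Ω)
    have h2 : Tendsto (fun n => (inner ℂ (adjoint a Ω)
        (birkhoffAverage ℂ U _root_.id n (b Ω)) : ℂ)) atTop
        (nhds (inner ℂ (adjoint a Ω) (P (b Ω)))) :=
      (Tendsto.inner tendsto_const_nhds h1)
    convert h2 using 2 with n
    rw [birkhoffAverage, birkhoffSum, inner_smul_right, inner_sum]
    congr 1
    refine Finset.sum_congr rfl fun k _ => ?_
    rw [adjoint_inner_left]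
    congr 1
    simp [mul_apply, ← ContinuousLinearMap.coe_pow]
  constructor
  · -- clustering → fixed vectors trivial
    intro hclus ξ hξ
    -- step 1: P (b Ω) = ⟪Ω, b Ω⟫ • Ω for b ∈ S
    have step2 : ∀ b ∈ S, P (b Ω) = (inner ℂ Ω (b Ω) : ℂ) • Ω := by
      intro b hb
      set z : H := P (b Ω) - (inner ℂ Ω (b Ω) : ℂ) • Ω with hz
      have horth : ∀ a ∈ S, (inner ℂ (a Ω) z : ℂ) = 0 := by
        intro a ha
        have h1 := hclus (star a) (star_mem ha) b hb
        have h2 := key (star a) b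
        have h3 : (inner ℂ (adjoint (star a) Ω) (P (b Ω)) : ℂ)
            = inner ℂ Ω ((star a) Ω) * inner ℂ Ω (b Ω) := tendsto_nhds_unique h2 h1
        have e1 : adjoint (star a) = a := by
          rw [← star_eq_adjoint, star_star]
        have e2 : (inner ℂ Ω ((star a) Ω) : ℂ) = inner ℂ (a Ω) Ω := by
          rw [star_eq_adjoint, adjoint_inner_right]
        rw [e1, e2] at h3
        rw [hz, inner_sub_right, h3, inner_smul_right]
        ring
      -- z is orthogonal to a dense set, hence zero
      have hall : ∀ y : H, (inner ℂ y z : ℂ) = 0 := by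
        have hcont : Continuous fun y : H => (inner ℂ y z : ℂ) :=
          continuous_inner.comp (continuous_id.prodMk continuous_const)
        have h0 : (fun y : H => (inner ℂ y z : ℂ)) = fun _ => 0 :=
          hcont.ext_on hcyc continuous_const
            (by rintro y ⟨a, ha, rfl⟩; exact horth a ha)
        intro y; exact congrFun h0 y
      have : z = 0 := by
        have := hall z
        rwa [inner_self_eq_zero] at this
      have := sub_eq_zero.mp this
      simpa [hz] using this
    -- step 2: P x = ⟪Ω, x⟫ • Ω for all x, by density
    have step3 : ∀ x : H, P x = (inner ℂ Ω x : ℂ) • Ω := by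
      have hc1 : Continuous P := by
        exact (F.orthogonalProjectionOnto).continuous.subtype_val
      have hc2 : Continuous fun x : H => (inner ℂ Ω x : ℂ) • Ω :=
        ((innerSL ℂ Ω).continuous).smul continuous_const
      have h0 : P = fun x : H => (inner ℂ Ω x : ℂ) • Ω :=
        hc1.ext_on hcyc hc2 (by rintro x ⟨b, hb, rfl⟩; exact step2 b hb)
      exact fun x => congrFun h0 x
    -- conclude
    have hξF : ξ ∈ F := (hmemF ξ).2 hξ
    have : P ξ = ξ := by
      have := Submodule.orthogonalProjectionOnto_mem_subspace_eq_self (K := F) ⟨ξ, hξF⟩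
      simpa [hP] using congrArg (Subtype.val) this
    exact ⟨inner ℂ Ω ξ, by rw [← step3 ξ, this]⟩
  · -- fixed vectors trivial → clustering
    intro htriv a ha b hb
    have hPb : P (b Ω) = (inner ℂ Ω (b Ω) : ℂ) • Ω := by
      have hfix : U (P (b Ω)) = P (b Ω) := (F.orthogonalProjectionOnto (b Ω)).2
      obtain ⟨c, hc⟩ := htriv _ hfix
      have hΩF : Ω ∈ F := (hmemF Ω).2 hUΩ
      have hperp : (inner ℂ Ω ((b Ω) - P (b Ω)) : ℂ) = 0 := by
        rw [← inner_conj_symm]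
        rw [show (inner ℂ (b Ω - P (b Ω)) Ω : ℂ) = 0 from F.starProjection_inner_eq_zero (b Ω) Ω hΩF]
        simp
      have : (inner ℂ Ω (P (b Ω)) : ℂ) = inner ℂ Ω (b Ω) := by
        rw [inner_sub_right] at hperp
        linear_combination -hperp
      rw [hc] at this ⊢
      rw [inner_smul_right] at this
      have hΩΩ : (inner ℂ Ω Ω : ℂ) = 1 := by
        rw [inner_self_eq_norm_sq_to_K, hΩ]; norm_num
      rw [hΩΩ, mul_one] at this
      rw [this]
    have := key a b
    rw [hPb] at this
    convert this using 2
    rw [inner_smul_right, adjoint_inner_left, mul_comm]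
end

section
/- Let H be a complex Hilbert space, A a unital *-subalgebra of B(H), Ω ∈ H a unit vector which is cyclic for A (i.e. {aΩ : a ∈ A} is dense in H), and U a unitary operator on H with UΩ = Ω and U a U* ∈ A for every a ∈ A. Assume that every x ∈ B(H) which commutes with every bounded operator commuting with all elements of A (i.e. x lies in the double commutant of A) and which commutes with U is a scalar multiple of the identity. Then the system converges to equilibrium: for all a, b, c ∈ A, lim_{n→∞} (1/n) Σ_{k=0}^{n−1} ⟨a (U^k b U^{−k}) c Ω, Ω⟩ = ⟨a c Ω, Ω⟩·⟨bΩ, Ω⟩. -/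
open Filter ContinuousLinearMap

lemma wot_ulim_exists {H : Type*} [NormedAddCommGroup H] [InnerProductSpace ℂ H]
    [CompleteSpace H] (𝔘 : Ultrafilter ℕ) (x : ℕ → H →L[ℂ] H) (M : ℝ) (hM0 : 0 ≤ M)
    (hM : ∀ n, ‖x n‖ ≤ M) :
    ∃ T : H →L[ℂ] H, ∀ ξ η : H,
      Tendsto (fun n => (inner ℂ ξ ((x n) η) : ℂ)) ↑𝔘 (nhds (inner ℂ ξ (T η))) := by
  have hbd : ∀ (ξ η : H) (n : ℕ), (inner ℂ ξ ((x n) η) : ℂ) ∈ Metric.closedBall (0:ℂ) (M * ‖ξ‖ * ‖η‖) := by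
    intro ξ η n
    rw [Metric.mem_closedBall, dist_zero_right]
    calc ‖(inner ℂ ξ ((x n) η) : ℂ)‖ ≤ ‖ξ‖ * ‖(x n) η‖ := norm_inner_le_norm _ _
      _ ≤ ‖ξ‖ * (‖x n‖ * ‖η‖) := by
          gcongr; exact (x n).le_opNorm η
      _ ≤ ‖ξ‖ * (M * ‖η‖) := by gcongr; exact hM n
      _ = M * ‖ξ‖ * ‖η‖ := by ring
  have hex : ∀ ξ η : H, ∃ z : ℂ, z ∈ Metric.closedBall (0:ℂ) (M * ‖ξ‖ * ‖η‖) ∧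
      Tendsto (fun n => (inner ℂ ξ ((x n) η) : ℂ)) ↑𝔘 (nhds z) := by
    intro ξ η
    obtain ⟨z, hz, hz2⟩ := (isCompact_closedBall (0:ℂ) (M * ‖ξ‖ * ‖η‖)).ultrafilter_le_nhds
      (𝔘.map (fun n => (inner ℂ ξ ((x n) η) : ℂ)))
      (by rw [Filter.le_principal_iff, Ultrafilter.mem_coe, Ultrafilter.mem_map]
          exact 𝔘.toFilter.univ_mem' (fun n => hbd ξ η n))
    exact ⟨z, hz, hz2⟩
  set B : H → H → ℂ := fun ξ η => (hex ξ η).choose with hB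
  have hBt : ∀ ξ η, Tendsto (fun n => (inner ℂ ξ ((x n) η) : ℂ)) ↑𝔘 (nhds (B ξ η)) :=
    fun ξ η => (hex ξ η).choose_spec.2
  have hBb : ∀ ξ η, ‖B ξ η‖ ≤ M * ‖ξ‖ * ‖η‖ := by
    intro ξ η
    have := (hex ξ η).choose_spec.1
    rwa [Metric.mem_closedBall, dist_zero_right] at this
  -- sesquilinearity
  have hBaddl : ∀ ξ₁ ξ₂ η, B (ξ₁ + ξ₂) η = B ξ₁ η + B ξ₂ η := by
    intro ξ₁ ξ₂ η
    refine tendsto_nhds_unique (hBt (ξ₁ + ξ₂) η) ?_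
    have := (hBt ξ₁ η).add (hBt ξ₂ η)
    refine this.congr (fun n => ?_)
    rw [inner_add_left]
  have hBsmull : ∀ (c : ℂ) ξ η, B (c • ξ) η = (starRingEnd ℂ) c * B ξ η := by
    intro c ξ η
    refine tendsto_nhds_unique (hBt (c • ξ) η) ?_
    have := (hBt ξ η).const_mul ((starRingEnd ℂ) c)
    refine this.congr (fun n => ?_)
    rw [inner_smul_left]
  have hBaddr : ∀ ξ η₁ η₂, B ξ (η₁ + η₂) = B ξ η₁ + B ξ η₂ := by
    intro ξ η₁ η₂
    refine tendsto_nhds_unique (hBt ξ (η₁ + η₂)) ?_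
    have := (hBt ξ η₁).add (hBt ξ η₂)
    refine this.congr (fun n => ?_)
    rw [map_add, inner_add_right]
  have hBsmulr : ∀ (c : ℂ) ξ η, B ξ (c • η) = c * B ξ η := by
    intro c ξ η
    refine tendsto_nhds_unique (hBt ξ (c • η)) ?_
    have := (hBt ξ η).const_mul c
    refine this.congr (fun n => ?_)
    rw [map_smul, inner_smul_right]
  -- functional for each η
  have hw : ∀ η : H, ∃ w : H, ∀ ξ : H, (inner ℂ ξ w : ℂ) = B ξ η := by
    intro η
    have hgb : ∀ ξ : H, ‖(starRingEnd ℂ) (B ξ η)‖ ≤ (M * ‖η‖) * ‖ξ‖ := by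
      intro ξ
      rw [RCLike.norm_conj]
      calc ‖B ξ η‖ ≤ M * ‖ξ‖ * ‖η‖ := hBb ξ η
        _ = (M * ‖η‖) * ‖ξ‖ := by ring
    set g : H →ₗ[ℂ] ℂ :=
      { toFun := fun ξ => (starRingEnd ℂ) (B ξ η)
        map_add' := by intro ξ₁ ξ₂; simp [hBaddl]
        map_smul' := by intro c ξ; simp [hBsmull] } with hg
    set gc : H →L[ℂ] ℂ := g.mkContinuous (M * ‖η‖) hgb with hgc
    refine ⟨(InnerProductSpace.toDual ℂ H).symm gc, fun ξ => ?_⟩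
    have : (inner ℂ ((InnerProductSpace.toDual ℂ H).symm gc) ξ : ℂ) = gc ξ := by
      rw [← InnerProductSpace.toDual_apply_apply]
      simp
    rw [← inner_conj_symm, this]
    show (starRingEnd ℂ) ((starRingEnd ℂ) (B ξ η)) = B ξ η
    simp
  set w : H → H := fun η => (hw η).choose with hwdef
  have hwspec : ∀ η ξ, (inner ℂ ξ (w η) : ℂ) = B ξ η := fun η => (hw η).choose_spec
  have hwadd : ∀ η₁ η₂, w (η₁ + η₂) = w η₁ + w η₂ := by
    intro η₁ η₂
    refine ext_inner_left ℂ (fun ξ => ?_)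
    rw [hwspec, inner_add_right, hwspec, hwspec, hBaddr]
  have hwsmul : ∀ (c : ℂ) η, w (c • η) = c • w η := by
    intro c η
    refine ext_inner_left ℂ (fun ξ => ?_)
    rw [hwspec, inner_smul_right, hwspec, hBsmulr]
  have hwnorm : ∀ η, ‖w η‖ ≤ M * ‖η‖ := by
    intro η
    rcases eq_or_ne (w η) 0 with h | h
    · rw [h, norm_zero]; positivity
    · have h2 : ‖w η‖ * ‖w η‖ ≤ (M * ‖η‖) * ‖w η‖ := by
        calc ‖w η‖ * ‖w η‖ = ‖(inner ℂ (w η) (w η) : ℂ)‖ := by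
              rw [inner_self_eq_norm_sq_to_K]; rw [norm_pow]
              · ring_nf
                simp [Complex.norm_real, abs_of_nonneg (norm_nonneg _), sq]
          _ = ‖B (w η) η‖ := by rw [hwspec]
          _ ≤ M * ‖w η‖ * ‖η‖ := hBb _ _
          _ = (M * ‖η‖) * ‖w η‖ := by ring
      exact le_of_mul_le_mul_right h2 (by simpa [norm_pos_iff] using h)
  set Tlin : H →ₗ[ℂ] H :=
    { toFun := w
      map_add' := hwadd
      map_smul' := hwsmul } with hTlin
  refine ⟨Tlin.mkContinuous M (fun η => hwnorm η), fun ξ η => ?_⟩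
  have : ((Tlin.mkContinuous M (fun η => hwnorm η)) η) = w η := rfl
  rw [this, hwspec]
  exact hBt ξ η

set_option maxHeartbeats 1000000 in
/-- for a unital *-subalgebra `S ⊆ B(H)` with cyclic unit vector `Ω` and
a unitary `U` with `UΩ = Ω` and `U S U* ⊆ S`, if the only elements of the double
commutant of `S` commuting with `U` are the scalars, then the system converges to
equilibrium: `(1/n) Σ_{k<n} ⟨a (U^k b U^{-k}) c Ω, Ω⟩ → ⟨a c Ω, Ω⟩ ⟨b Ω, Ω⟩`. -/
theorem trivialFixedDoubleCommutant_implies_convergenceToEquilibrium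
    {H : Type*} [NormedAddCommGroup H] [InnerProductSpace ℂ H] [CompleteSpace H]
    (S : StarSubalgebra ℂ (H →L[ℂ] H)) (Ω : H) (hΩ : ‖Ω‖ = 1)
    (hcyc : Dense ((fun T : H →L[ℂ] H => T Ω) '' (S : Set (H →L[ℂ] H))))
    (U : H →L[ℂ] H)
    (hU : U * adjoint U = 1 ∧ adjoint U * U = 1)
    (hUΩ : U Ω = Ω)
    (hUS : ∀ a ∈ S, U * a * adjoint U ∈ S)
    (htriv : ∀ x : H →L[ℂ] H,
      (∀ y : H →L[ℂ] H, (∀ a ∈ S, a * y = y * a) → x * y = y * x) →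
      x * U = U * x → ∃ c : ℂ, x = c • (1 : H →L[ℂ] H)) :
    ∀ a ∈ S, ∀ b ∈ S, ∀ c ∈ S,
      Tendsto (fun n : ℕ => (n : ℂ)⁻¹ *
          ∑ k ∈ Finset.range n,
            (inner ℂ Ω ((a * (U ^ k * b * (adjoint U) ^ k) * c) Ω) : ℂ))
        atTop (nhds ((inner ℂ Ω ((a * c) Ω) : ℂ) * inner ℂ Ω (b Ω))) := by
  intro a ha b hb c hc
  -- basic facts about U
  have hadjΩ : adjoint U Ω = Ω := by
    conv_lhs => rw [← hUΩ]
    rw [← ContinuousLinearMap.mul_apply, hU.2, ContinuousLinearMap.one_apply]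
  have hadjpowΩ : ∀ k : ℕ, ((adjoint U) ^ k) Ω = Ω := by
    intro k
    induction k with
    | zero => simp
    | succ k ih => rw [pow_succ, ContinuousLinearMap.mul_apply, hadjΩ, ih]
  have hUnorm : ∀ ξ : H, ‖U ξ‖ = ‖ξ‖ := by
    intro ξ
    have h1 : (inner ℂ (U ξ) (U ξ) : ℂ) = inner ℂ ξ ξ := by
      rw [← adjoint_inner_left U ξ (U ξ), ← ContinuousLinearMap.mul_apply, hU.2,
        ContinuousLinearMap.one_apply]
    have h2 := @inner_self_eq_norm_sq ℂ H _ _ _ (U ξ)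
    have h3 := @inner_self_eq_norm_sq ℂ H _ _ _ ξ
    rw [h1, h3] at h2
    nlinarith [norm_nonneg (U ξ), norm_nonneg ξ]
  have hadjnorm : ∀ ξ : H, ‖adjoint U ξ‖ = ‖ξ‖ := by
    intro ξ
    have h1 : (inner ℂ (adjoint U ξ) (adjoint U ξ) : ℂ) = inner ℂ ξ ξ := by
      rw [adjoint_inner_left U (adjoint U ξ) ξ]
      rw [← ContinuousLinearMap.mul_apply U (adjoint U), hU.1, ContinuousLinearMap.one_apply]
    have h2 := @inner_self_eq_norm_sq ℂ H _ _ _ (adjoint U ξ)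
    have h3 := @inner_self_eq_norm_sq ℂ H _ _ _ ξ
    rw [h1, h3] at h2
    nlinarith [norm_nonneg (adjoint U ξ), norm_nonneg ξ]
  have hUop : ‖U‖ ≤ 1 := U.opNorm_le_bound zero_le_one (fun ξ => by rw [hUnorm, one_mul])
  have hadjop : ‖adjoint U‖ ≤ 1 :=
    (adjoint U).opNorm_le_bound zero_le_one (fun ξ => by rw [hadjnorm, one_mul])
  -- the conjugates A k and averages x n
  set A : ℕ → H →L[ℂ] H := fun k => U ^ k * b * (adjoint U) ^ k with hA
  have hAS : ∀ k, A k ∈ S := by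
    intro k
    induction k with
    | zero => simpa [hA] using hb
    | succ k ih =>
        have hswap : U ^ k * U = U * U ^ k := by
          rw [← pow_succ, ← pow_succ']
        have : A (k + 1) = U * A k * adjoint U := by
          simp only [hA, pow_succ _ k, mul_assoc]
          rw [← mul_assoc, ← mul_assoc, hswap, mul_assoc, mul_assoc]
        rw [this]
        exact hUS _ ih
  have hAnorm : ∀ k, ‖A k‖ ≤ ‖b‖ := by
    intro k
    have hpow : ∀ (V : H →L[ℂ] H), ‖V‖ ≤ 1 → ‖V ^ k‖ ≤ 1 := by
      intro V hV
      induction k with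
      | zero => rw [pow_zero]; exact ContinuousLinearMap.norm_id_le
      | succ k ih =>
          calc ‖V ^ (k+1)‖ = ‖V ^ k * V‖ := by rw [pow_succ]
            _ ≤ ‖V ^ k‖ * ‖V‖ := norm_mul_le _ _
            _ ≤ 1 * 1 := mul_le_mul ih hV (norm_nonneg _) zero_le_one
            _ = 1 := one_mul 1
    calc ‖A k‖ ≤ ‖U ^ k * b‖ * ‖(adjoint U) ^ k‖ := norm_mul_le _ _
      _ ≤ (‖U ^ k‖ * ‖b‖) * ‖(adjoint U) ^ k‖ :=
          mul_le_mul_of_nonneg_right (norm_mul_le _ _) (norm_nonneg _)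
      _ ≤ (1 * ‖b‖) * 1 := by
          exact mul_le_mul
            (mul_le_mul_of_nonneg_right (hpow U hUop) (norm_nonneg b))
            (hpow (adjoint U) hadjop) (norm_nonneg _) (by positivity)
      _ = ‖b‖ := by ring
  set x : ℕ → H →L[ℂ] H := fun n => (n : ℂ)⁻¹ • ∑ k ∈ Finset.range n, A k with hx
  have hxnorm : ∀ n, ‖x n‖ ≤ ‖b‖ := by
    intro n
    rcases Nat.eq_zero_or_pos n with h0 | hpos
    · simp [hx, h0, norm_nonneg]
    · have hsum : ‖∑ k ∈ Finset.range n, A k‖ ≤ n * ‖b‖ := by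
        calc ‖∑ k ∈ Finset.range n, A k‖ ≤ ∑ k ∈ Finset.range n, ‖A k‖ := norm_sum_le _ _
          _ ≤ ∑ _k ∈ Finset.range n, ‖b‖ := Finset.sum_le_sum (fun k _ => hAnorm k)
          _ = n * ‖b‖ := by rw [Finset.sum_const, Finset.card_range, nsmul_eq_mul]
      have hnc : ‖(n : ℂ)⁻¹‖ = (n : ℝ)⁻¹ := by
        rw [norm_inv, Complex.norm_natCast]
      calc ‖x n‖ = ‖(n : ℂ)⁻¹‖ * ‖∑ k ∈ Finset.range n, A k‖ := norm_smul _ _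
        _ ≤ (n : ℝ)⁻¹ * (n * ‖b‖) := by
            rw [hnc]
            exact mul_le_mul_of_nonneg_left hsum (by positivity)
        _ = ((n : ℝ)⁻¹ * n) * ‖b‖ := by ring
        _ = ‖b‖ := by
            rw [inv_mul_cancel₀ (by exact_mod_cast hpos.ne' : (n : ℝ) ≠ 0), one_mul]
  -- commutation of x n with the commutant of S
  have hxcomm : ∀ y : H →L[ℂ] H, (∀ s ∈ S, s * y = y * s) → ∀ n, x n * y = y * x n := by
    intro y hy n
    simp only [hx, smul_mul_assoc, mul_smul_comm, Finset.sum_mul, Finset.mul_sum]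
    congr 1
    exact Finset.sum_congr rfl (fun k _ => hy (A k) (hAS k))
  -- commutation defect with U
  have hUA : ∀ k, U * A k = A (k + 1) * U := by
    intro k
    have hswap : U ^ k * U = U * U ^ k := by
      rw [← pow_succ, ← pow_succ']
    have : A (k + 1) * U = U * (A k * (adjoint U * U)) := by
      simp only [hA, pow_succ _ k, mul_assoc]
      rw [← mul_assoc, ← mul_assoc, hswap, mul_assoc, mul_assoc]
    rw [this, hU.2, mul_one]
  have hUx : ∀ n, U * x n = x n * U + (n : ℂ)⁻¹ • ((A n - A 0) * U) := by
    intro n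
    simp only [hx, mul_smul_comm, smul_mul_assoc, Finset.mul_sum, Finset.sum_mul]
    rw [← smul_add]
    congr 1
    have h1 : ∀ k ∈ Finset.range n, U * A k = A (k + 1) * U := fun k _ => hUA k
    rw [Finset.sum_congr rfl h1]
    have h3 := Finset.sum_range_succ' (fun k => A k * U) n
    have h4 := Finset.sum_range_succ (fun k => A k * U) n
    rw [h4] at h3
    -- h3 : ∑_{k<n+1} ... rewritten : ∑_{k<n} A k*U + A n*U = ∑_{k<n} A (k+1)*U + A 0*U
    have h5 : ∑ k ∈ Finset.range n, A (k + 1) * U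
        = ((∑ k ∈ Finset.range n, A k * U) + A n * U) - A 0 * U :=
      (eq_sub_of_add_eq h3.symm)
    rw [h5, sub_mul]
    abel
  -- constancy of the state on x n
  have hxΩ : ∀ n : ℕ, 1 ≤ n → (inner ℂ Ω ((x n) Ω) : ℂ) = inner ℂ Ω (b Ω) := by
    intro n hn
    have hAΩ : ∀ k, (inner ℂ Ω ((A k) Ω) : ℂ) = inner ℂ Ω (b Ω) := by
      intro k
      have h1 : (A k) Ω = (U ^ k) (b Ω) := by
        simp only [hA, ContinuousLinearMap.mul_apply, hadjpowΩ]
      rw [h1, ← adjoint_inner_left (U ^ k) (b Ω) Ω]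
      congr 1
      rw [← ContinuousLinearMap.star_eq_adjoint, star_pow, ContinuousLinearMap.star_eq_adjoint,
        hadjpowΩ]
    have : (inner ℂ Ω ((x n) Ω) : ℂ)
        = (n : ℂ)⁻¹ * ∑ k ∈ Finset.range n, (inner ℂ Ω ((A k) Ω) : ℂ) := by
      simp only [hx, ContinuousLinearMap.smul_apply, ContinuousLinearMap.sum_apply,
        inner_smul_right, inner_sum]
    rw [this, Finset.sum_congr rfl (fun k _ => hAΩ k), Finset.sum_const, Finset.card_range,
      nsmul_eq_mul, ← mul_assoc, inv_mul_cancel₀, one_mul]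
    exact_mod_cast (Nat.one_le_iff_ne_zero.mp hn)
  -- rewrite the goal sequence
  have hgoal : ∀ n : ℕ, ((n : ℂ)⁻¹ *
      ∑ k ∈ Finset.range n, (inner ℂ Ω ((a * (U ^ k * b * (adjoint U) ^ k) * c) Ω) : ℂ))
      = (inner ℂ (adjoint a Ω) ((x n) (c Ω)) : ℂ) := by
    intro n
    have h1 : ∀ k, (inner ℂ Ω ((a * (U ^ k * b * (adjoint U) ^ k) * c) Ω) : ℂ)
        = inner ℂ (adjoint a Ω) ((A k) (c Ω)) := by
      intro k
      rw [adjoint_inner_left]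
      simp only [hA, ContinuousLinearMap.mul_apply]
    rw [Finset.sum_congr rfl (fun k _ => h1 k)]
    simp only [hx, ContinuousLinearMap.smul_apply, ContinuousLinearMap.sum_apply,
      inner_smul_right, inner_sum]
  simp only [hgoal]
  -- ultrafilter argument
  rw [Filter.tendsto_iff_ultrafilter]
  intro 𝔘 h𝔘
  obtain ⟨T, hT⟩ := wot_ulim_exists 𝔘 x ‖b‖ (norm_nonneg b) hxnorm
  -- T commutes with the commutant of S
  have hTcomm : ∀ y : H →L[ℂ] H, (∀ s ∈ S, s * y = y * s) → T * y = y * T := by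
    intro y hy
    ext η
    refine ext_inner_left ℂ (fun ξ => ?_)
    have h1 : Tendsto (fun n => (inner ℂ ξ ((x n) (y η)) : ℂ)) ↑𝔘 (nhds (inner ℂ ξ (T (y η)))) :=
      hT ξ (y η)
    have h2 : Tendsto (fun n => (inner ℂ ξ ((x n) (y η)) : ℂ)) ↑𝔘
        (nhds (inner ℂ (adjoint y ξ) (T η))) := by
      refine (hT (adjoint y ξ) η).congr (fun n => ?_)
      rw [adjoint_inner_left]
      rw [← ContinuousLinearMap.mul_apply y (x n) η, ← hxcomm y hy n,
        ContinuousLinearMap.mul_apply]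
    have h3 := tendsto_nhds_unique h2 h1
    show (inner ℂ ξ ((T * y) η) : ℂ) = inner ℂ ξ ((y * T) η)
    rw [ContinuousLinearMap.mul_apply, ContinuousLinearMap.mul_apply, ← h3,
      adjoint_inner_left]
  -- T commutes with U
  have hTU : T * U = U * T := by
    ext η
    refine ext_inner_left ℂ (fun ξ => ?_)
    have h1 : Tendsto (fun n => (inner ℂ ξ ((x n) (U η)) : ℂ)) ↑𝔘 (nhds (inner ℂ ξ (T (U η)))) :=
      hT ξ (U η)
    have h2 : Tendsto (fun n => (inner ℂ ξ (U ((x n) η))) : ℕ → ℂ) ↑𝔘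
        (nhds (inner ℂ (adjoint U ξ) (T η))) := by
      refine (hT (adjoint U ξ) η).congr (fun n => ?_)
      rw [adjoint_inner_left]
    have hdiff : Tendsto (fun n => (inner ℂ ξ (U ((x n) η)) : ℂ) - inner ℂ ξ ((x n) (U η)))
        atTop (nhds 0) := by
      have hb0 : ∀ n : ℕ, ‖(inner ℂ ξ (U ((x n) η)) : ℂ) - inner ℂ ξ ((x n) (U η))‖
          ≤ (n : ℝ)⁻¹ * (2 * ‖b‖ * ‖ξ‖ * ‖η‖) := by
        intro n
        have he : (inner ℂ ξ (U ((x n) η)) : ℂ) - inner ℂ ξ ((x n) (U η))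
            = inner ℂ ξ (((n : ℂ)⁻¹ • ((A n - A 0) * U)) η) := by
          rw [← inner_sub_right]
          congr 1
          have := congrArg (fun (V : H →L[ℂ] H) => V η) (hUx n)
          simp only [ContinuousLinearMap.add_apply, ContinuousLinearMap.mul_apply] at this
          rw [← ContinuousLinearMap.mul_apply U (x n) η, ← ContinuousLinearMap.mul_apply (x n) U η]
          rw [hUx n]
          simp
        rw [he]
        calc ‖(inner ℂ ξ (((n : ℂ)⁻¹ • ((A n - A 0) * U)) η) : ℂ)‖
            ≤ ‖ξ‖ * ‖((n : ℂ)⁻¹ • ((A n - A 0) * U)) η‖ := norm_inner_le_norm _ _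
          _ ≤ ‖ξ‖ * (‖(n : ℂ)⁻¹ • ((A n - A 0) * U)‖ * ‖η‖) := by
              gcongr; exact ContinuousLinearMap.le_opNorm _ _
          _ ≤ ‖ξ‖ * (((n : ℝ)⁻¹ * (2 * ‖b‖)) * ‖η‖) := by
              have hop : ‖(n : ℂ)⁻¹ • ((A n - A 0) * U)‖ ≤ (n : ℝ)⁻¹ * (2 * ‖b‖) := by
                rw [norm_smul, norm_inv, Complex.norm_natCast]
                refine mul_le_mul_of_nonneg_left ?_ (by positivity)
                calc ‖(A n - A 0) * U‖ ≤ ‖A n - A 0‖ * ‖U‖ := norm_mul_le _ _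
                  _ ≤ (‖A n‖ + ‖A 0‖) * 1 :=
                      mul_le_mul (norm_sub_le _ _) hUop (norm_nonneg _)
                        (by positivity)
                  _ ≤ (‖b‖ + ‖b‖) * 1 := by
                      have := hAnorm n; have := hAnorm 0
                      nlinarith
                  _ = 2 * ‖b‖ := by ring
              exact mul_le_mul_of_nonneg_left
                (mul_le_mul_of_nonneg_right hop (norm_nonneg η)) (norm_nonneg ξ)
          _ = (n : ℝ)⁻¹ * (2 * ‖b‖ * ‖ξ‖ * ‖η‖) := by ring
      have hlim : Tendsto (fun n : ℕ => (n : ℝ)⁻¹ * (2 * ‖b‖ * ‖ξ‖ * ‖η‖)) atTop (nhds 0) := by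
        have := tendsto_inv_atTop_nhds_zero_nat.mul_const (2 * ‖b‖ * ‖ξ‖ * ‖η‖)
        simpa using this
      exact squeeze_zero_norm hb0 hlim
    have h4 : Tendsto (fun n => (inner ℂ ξ (U ((x n) η)) : ℂ) - inner ℂ ξ ((x n) (U η))) ↑𝔘
        (nhds ((inner ℂ (adjoint U ξ) (T η) : ℂ) - inner ℂ ξ (T (U η)))) := h2.sub h1
    have h5 := tendsto_nhds_unique h4 (hdiff.mono_left h𝔘)
    have h6 : (inner ℂ (adjoint U ξ) (T η) : ℂ) = inner ℂ ξ (T (U η)) := sub_eq_zero.mp h5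
    show (inner ℂ ξ ((T * U) η) : ℂ) = inner ℂ ξ ((U * T) η)
    rw [ContinuousLinearMap.mul_apply, ContinuousLinearMap.mul_apply, ← adjoint_inner_left U,
      h6]
  -- T is scalar
  obtain ⟨c₀, hc₀⟩ := htriv T hTcomm hTU
  -- identify c₀
  have hTΩ : (inner ℂ Ω (T Ω) : ℂ) = inner ℂ Ω (b Ω) := by
    have h1 : Tendsto (fun n => (inner ℂ Ω ((x n) Ω) : ℂ)) ↑𝔘 (nhds (inner ℂ Ω (T Ω))) := hT Ω Ω
    have h2 : Tendsto (fun n => (inner ℂ Ω ((x n) Ω) : ℂ)) atTop (nhds (inner ℂ Ω (b Ω))) := by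
      refine Tendsto.congr' ?_ tendsto_const_nhds
      filter_upwards [Filter.eventually_ge_atTop 1] with n hn
      exact (hxΩ n hn).symm
    exact tendsto_nhds_unique h1 (h2.mono_left h𝔘)
  have hc₀val : c₀ = (inner ℂ Ω (b Ω) : ℂ) := by
    rw [← hTΩ, hc₀]
    simp only [ContinuousLinearMap.smul_apply, ContinuousLinearMap.one_apply, inner_smul_right]
    rw [inner_self_eq_norm_sq_to_K, hΩ]
    norm_num
  -- conclude
  have hfin : (inner ℂ (adjoint a Ω) (T (c Ω)) : ℂ)
      = (inner ℂ Ω ((a * c) Ω) : ℂ) * inner ℂ Ω (b Ω) := by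
    rw [hc₀]
    simp only [ContinuousLinearMap.smul_apply, ContinuousLinearMap.one_apply, inner_smul_right]
    rw [hc₀val, adjoint_inner_left, ContinuousLinearMap.mul_apply]
    ring
  rw [← hfin]
  exact hT (adjoint a Ω) (c Ω)
end

section
/- The norm closure of the unital *-subalgebra of B(H) generated by the selfadjoint parts of the Boolean annihilators, {a_i + a_i* : i ∈ ℤ}, coincides with the norm closure of the unital *-subalgebra of B(H) generated by the Boolean annihilators {a_i : i ∈ ℤ}. -/
noncomputable section

abbrev BooleanSpace : Type := lp (fun _ : Option ℤ => ℂ) 2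

def e (x : Option ℤ) : BooleanSpace := lp.single 2 x (1 : ℂ)

def ann (i : ℤ) : BooleanSpace →L[ℂ] BooleanSpace :=
  (innerSL ℂ (e (some i))).smulRight (e none)

lemma inner_e (x y : Option ℤ) :
    (inner ℂ (e x) (e y) : ℂ) = if x = y then 1 else 0 := by
  rw [e, e, lp.inner_single_left]
  rcases eq_or_ne x y with h | h
  · subst h; simp [lp.single_apply_self]
  · rw [lp.single_apply, Pi.single_eq_of_ne h]
    simp [h]

lemma ann_apply (i : ℤ) (ξ : BooleanSpace) :
    ann i ξ = (inner ℂ (e (some i)) ξ : ℂ) • e none := rfl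

lemma adj_ann (i : ℤ) :
    ContinuousLinearMap.adjoint (ann i)
      = (innerSL ℂ (e none)).smulRight (e (some i)) := by
  symm
  rw [ContinuousLinearMap.eq_adjoint_iff]
  intro ξ η
  simp [ann_apply, ContinuousLinearMap.smulRight_apply, innerSL_apply_apply,
    inner_smul_left, inner_smul_right, inner_conj_symm, mul_comm]

lemma key (i : ℤ) (s : ℤ → (BooleanSpace →L[ℂ] BooleanSpace))
    (hsdef : s = fun j => ann j + ContinuousLinearMap.adjoint (ann j)) :
    ann i = (s i * s i - s i * s (i+1) * (s (i+1) * s i)) * s i := by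
  subst hsdef
  ext ξ x
  have hne : (some i : Option ℤ) ≠ some (i+1) := by simp
  simp only [ContinuousLinearMap.mul_apply, ContinuousLinearMap.sub_apply,
    ContinuousLinearMap.add_apply, adj_ann, ann_apply,
    ContinuousLinearMap.smulRight_apply, innerSL_apply_apply, inner_smul_right,
    inner_add_right, inner_e, smul_smul]
  simp [hne, hne.symm]

/-- the norm closure of the unital *-subalgebra generated by the
selfadjoint parts `{a_i + a_i* : i ∈ ℤ}` of the Boolean annihilators coincides with
the norm closure of the unital *-subalgebra generated by the annihilators
`{a_i : i ∈ ℤ}`. -/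
theorem closure_starAlgebra_selfadjointParts_eq_closure_starAlgebra_ann :
    (StarAlgebra.adjoin ℂ
        (Set.range fun i : ℤ => ann i + ContinuousLinearMap.adjoint (ann i))).topologicalClosure
      = (StarAlgebra.adjoin ℂ (Set.range ann)).topologicalClosure := by
  congr 1
  apply le_antisymm
  · rw [StarAlgebra.adjoin_le_iff]
    rintro _ ⟨i, rfl⟩
    exact add_mem (StarAlgebra.subset_adjoin ℂ _ ⟨i, rfl⟩)
      (star_mem (StarAlgebra.subset_adjoin ℂ _ ⟨i, rfl⟩))
  · rw [StarAlgebra.adjoin_le_iff]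
    rintro _ ⟨i, rfl⟩
    have hs : ∀ j : ℤ, ann j + ContinuousLinearMap.adjoint (ann j) ∈
        StarAlgebra.adjoin ℂ
          (Set.range fun i : ℤ => ann i + ContinuousLinearMap.adjoint (ann i)) :=
      fun j => StarAlgebra.subset_adjoin ℂ _ ⟨j, rfl⟩
    rw [key i _ rfl]
    exact mul_mem (sub_mem (mul_mem (hs i) (hs i))
      (mul_mem (mul_mem (hs i) (hs (i+1))) (mul_mem (hs (i+1)) (hs i)))) (hs i)
end
end
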